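/- arXiv:1112.0970 — 3 statements merged into one kernel-verified Lean document; each statement's English description precedes it below -/
import Mathlib

section
/- Let n = (n_1,…,n_m) be a tuple of nonnegative integers with N = n_1+⋯+n_m. The number of inhomogeneous perfect matchings of [N] (with respect to the boxes determined by n) having no crossing equals (2/π) ∫_{-1}^{1} U_{n_1}(x)⋯U_{n_m}(x) √(1−x²) dx, where U_n denotes the Chebyshev polynomial of the second kind (U_0 = 1, U_1(x) = 2x, U_{n+1}(x) = 2x·U_n(x) − U_{n-1}(x)). -/
open Finset MeasureTheory
open scoped Classical

namespace Paper

/-- Sum of sizes of boxes before box `j`. -/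
def psum {m : ℕ} (n : Fin m → ℕ) (j : Fin m) : ℕ :=
  ∑ t : Fin m, if t < j then n t else 0

/-- `i` (0-indexed) lies in box `j`. -/
def inBox {m : ℕ} (n : Fin m → ℕ) (j : Fin m) (i : ℕ) : Prop :=
  psum n j ≤ i ∧ i < psum n j + n j

/-- `i` and `k` lie in a common box. -/
def sameBox {m : ℕ} (n : Fin m → ℕ) (i k : ℕ) : Prop :=
  ∃ j : Fin m, inBox n j i ∧ inBox n j k

/-- Total number of elements. -/
def total {m : ℕ} (n : Fin m → ℕ) : ℕ := ∑ t, n t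

/-- `P` is a set partition of `{0, …, N-1}`. -/
def IsPartitionOf (N : ℕ) (P : Finset (Finset ℕ)) : Prop :=
  (∀ b ∈ P, b ⊆ Finset.range N ∧ b.Nonempty) ∧
  ∀ i ∈ Finset.range N, (P.filter fun b => i ∈ b).card = 1

/-- No block of `P` contains two distinct elements of the same box. -/
def InhomBlocks {m : ℕ} (n : Fin m → ℕ) (P : Finset (Finset ℕ)) : Prop :=
  ∀ b ∈ P, ∀ i ∈ b, ∀ k ∈ b, i ≠ k → ¬ sameBox n i k

/-- The inhomogeneous perfect matchings of `[N]` w.r.t. the boxes of `n`. -/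
noncomputable def matchings {m : ℕ} (n : Fin m → ℕ) : Finset (Finset (Finset ℕ)) :=
  ((Finset.range (total n)).powerset.powerset).filter
    (fun P => IsPartitionOf (total n) P ∧ (∀ b ∈ P, b.card = 2) ∧ InhomBlocks n P)

/-- Number of inhomogeneous perfect matchings. -/
noncomputable def K {m : ℕ} (n : Fin m → ℕ) : ℕ := (matchings n).card


/-- `(i,j)` is an arc of the partition `P`: `i < j` lie in a common block with
no block element strictly between them. -/
def IsArc (P : Finset (Finset ℕ)) (i j : ℕ) : Prop :=
  i < j ∧ ∃ b ∈ P, i ∈ b ∧ j ∈ b ∧ ∀ t ∈ b, ¬ (i < t ∧ t < j)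

/-- Number of crossings of a set partition of `[N]`: pairs of arcs `(i,j)`, `(k,l)`
with `i < k < j < l`. -/
noncomputable def crossNum (N : ℕ) (P : Finset (Finset ℕ)) : ℕ :=
  (((Finset.range N ×ˢ Finset.range N) ×ˢ (Finset.range N ×ˢ Finset.range N)).filter
    (fun q => IsArc P q.1.1 q.1.2 ∧ IsArc P q.2.1 q.2.2 ∧
      q.1.1 < q.2.1 ∧ q.2.1 < q.1.2 ∧ q.1.2 < q.2.2)).card

/-- Chebyshev polynomials of the second kind: `U 0 = 1`, `U 1 x = 2x`,
`U (n+2) x = 2x·U (n+1) x - U n x`. -/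
noncomputable def chebU : ℕ → ℝ → ℝ
  | 0, _ => 1
  | 1, x => 2 * x
  | (n + 2), x => 2 * x * chebU (n + 1) x - chebU n x

/-! ### Prefix sums over ℕ -/

def np {m : ℕ} (n : Fin m → ℕ) (t : ℕ) : ℕ := if h : t < m then n ⟨t, h⟩ else 0

def Psum {m : ℕ} (n : Fin m → ℕ) (j : ℕ) : ℕ := ∑ t ∈ range j, np n t

variable {m : ℕ} {n : Fin m → ℕ}

lemma Psum_succ (j : ℕ) : Psum n (j + 1) = Psum n j + np n j :=
  Finset.sum_range_succ _ j

lemma Psum_mono {j j' : ℕ} (h : j ≤ j') : Psum n j ≤ Psum n j' :=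
  Finset.sum_le_sum_of_subset (Finset.range_subset_range.2 h)

lemma np_coe (j : Fin m) : np n j.1 = n j := by simp [np, j.2, Fin.eta]

lemma psum_eq (j : Fin m) : psum n j = Psum n j.1 := by
  have h1 : psum n j = ∑ t : Fin m, (fun t : ℕ => if t < j.1 then np n t else 0) t.1 := by
    apply Finset.sum_congr rfl
    intro t _
    simp only [Fin.lt_def]
    by_cases h : t.1 < j.1
    · simp [h, np_coe]
    · simp [h]
  rw [h1, Fin.sum_univ_eq_sum_range (fun t => if t < j.1 then np n t else 0) m]
  have h2 : (∑ i ∈ range m, if i < j.1 then np n i else 0)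
      = ∑ i ∈ (range m).filter (· < j.1), np n i := (Finset.sum_filter _ _).symm
  have h3 : (range m).filter (· < j.1) = range j.1 := by
    ext t
    simp only [Finset.mem_filter, Finset.mem_range]
    have := j.2
    omega
  rw [h2, h3, Psum]

lemma total_eq : total n = Psum n m := by
  rw [total, Psum, ← Fin.sum_univ_eq_sum_range (fun t => np n t) m]
  exact Finset.sum_congr rfl fun t _ => (np_coe t).symm

lemma inBox_iff (j : Fin m) (i : ℕ) :
    inBox n j i ↔ (Psum n j.1 ≤ i ∧ i < Psum n (j.1 + 1)) := by
  rw [inBox, psum_eq, Psum_succ, np_coe]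

lemma boxOf {i : ℕ} (hi : i < Psum n m) :
    ∃ j : ℕ, j < m ∧ Psum n j ≤ i ∧ i < Psum n (j + 1) := by
  set P : ℕ → Prop := fun k => Psum n k ≤ i with hP
  have h0 : P 0 := by simp [hP, Psum]
  have hspec : P (Nat.findGreatest P m) := Nat.findGreatest_spec (Nat.zero_le m) h0
  have hle : Nat.findGreatest P m ≤ m := Nat.findGreatest_le m
  have hne : Nat.findGreatest P m ≠ m := by
    intro h; rw [h] at hspec; exact absurd hspec (by simpa [hP] using hi)
  refine ⟨Nat.findGreatest P m, by omega, hspec, ?_⟩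
  have := Nat.findGreatest_is_greatest (k := Nat.findGreatest P m + 1) (P := P) (n := m)
    (by omega) (by omega)
  simpa [hP] using this

lemma box_unique {j j' i : ℕ} (hj : j < m) (hj' : j' < m)
    (h1 : Psum n j ≤ i) (h2 : i < Psum n (j + 1))
    (h3 : Psum n j' ≤ i) (h4 : i < Psum n (j' + 1)) : j = j' := by
  by_contra hne
  rcases Nat.lt_or_ge j j' with h | h
  · have := Psum_mono (n := n) (show j + 1 ≤ j' from h)
    omega
  · have hlt : j' < j := by omega
    have := Psum_mono (n := n) (show j' + 1 ≤ j from hlt)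
    omega

/-! ### Words and their sums -/

def wsum (w : ℕ → Bool) (r : ℕ) : ℤ := ∑ t ∈ range r, (if w t then (1:ℤ) else -1)

lemma wsum_succ (w : ℕ → Bool) (r : ℕ) :
    wsum w (r + 1) = wsum w r + (if w r then (1:ℤ) else -1) :=
  Finset.sum_range_succ _ r

lemma wsum_zero (w : ℕ → Bool) : wsum w 0 = 0 := rfl

lemma wsum_step_le (w : ℕ → Bool) (r : ℕ) :
    wsum w r - 1 ≤ wsum w (r + 1) ∧ wsum w (r + 1) ≤ wsum w r + 1 := by
  rw [wsum_succ]; by_cases h : w r <;> simp [h] <;> omega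

lemma wsum_eq_add {a b : ℕ} (w : ℕ → Bool) (h : a ≤ b) :
    wsum w b = wsum w a + ∑ t ∈ Ico a b, (if w t then (1:ℤ) else -1) :=
  (Finset.sum_range_add_sum_Ico _ h).symm

def Bal (w : ℕ → Bool) (N : ℕ) : Prop :=
  (∀ r, r ≤ N → 0 ≤ wsum w r) ∧ wsum w N = 0

/-- first return to the same level after an opener -/
noncomputable def fret (w : ℕ → Bool) (p : ℕ) : ℕ :=
  sInf {q | p < q ∧ wsum w (q + 1) = wsum w p}

lemma fret_eq {w : ℕ → Bool} {p q : ℕ} (hq : p < q)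
    (hret : wsum w (q + 1) = wsum w p)
    (hstrict : ∀ r, p < r → r ≤ q → wsum w p < wsum w r) :
    fret w p = q := by
  have hne : ({q' | p < q' ∧ wsum w (q' + 1) = wsum w p} : Set ℕ).Nonempty := ⟨q, hq, hret⟩
  have hmem := Nat.sInf_mem hne
  have hle : sInf {q' | p < q' ∧ wsum w (q' + 1) = wsum w p} ≤ q := Nat.sInf_le ⟨hq, hret⟩
  obtain ⟨hpf, hfret⟩ := hmem
  unfold fret
  rcases Nat.lt_or_ge (sInf {q' | p < q' ∧ wsum w (q' + 1) = wsum w p}) q with hlt | hge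
  · exfalso
    have := hstrict (sInf {q' | p < q' ∧ wsum w (q' + 1) = wsum w p} + 1) (by omega) (by omega)
    omega
  · omega

section FirstReturn

variable {w : ℕ → Bool} {N : ℕ}

lemma first_return_exists (hB : Bal w N) {p : ℕ} (hp : p < N) (hw : w p = true) :
    p < fret w p ∧ fret w p < N ∧ wsum w (fret w p + 1) = wsum w p ∧
      (∀ r, p < r → r ≤ fret w p → wsum w p < wsum w r) ∧ w (fret w p) = false := by
  have hstep : wsum w (p + 1) = wsum w p + 1 := by rw [wsum_succ, hw]; simp
  -- T : positions where we have returned at or below the level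
  set T : Set ℕ := {k | p ≤ k ∧ k < N ∧ wsum w (k + 1) ≤ wsum w p} with hT
  have hTne : T.Nonempty := by
    refine ⟨N - 1, by omega, by omega, ?_⟩
    have : N - 1 + 1 = N := by omega
    rw [this, hB.2]
    exact hB.1 p hp.le
  set q := sInf T with hqdef
  obtain ⟨hpq, hqN, hqle⟩ : p ≤ q ∧ q < N ∧ wsum w (q + 1) ≤ wsum w p := Nat.sInf_mem hTne
  -- strictness below q
  have hstrict : ∀ r, p < r → r ≤ q → wsum w p < wsum w r := by
    have key : ∀ r, p + 1 ≤ r → r ≤ q → wsum w p < wsum w r := by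
      intro r hr
      induction r, hr using Nat.le_induction with
      | base =>
        intro _; omega
      | succ r hr ih =>
        intro hrq
        have hr1 : wsum w p < wsum w r := ih (by omega)
        have hnotT : r ∉ T := Nat.notMem_of_lt_sInf (by omega)
        have h5 : ¬ (p ≤ r ∧ r < N ∧ wsum w (r + 1) ≤ wsum w p) := hnotT
        have hrN : r < N := by omega
        have hstep2 := wsum_step_le w r
        omega
    intro r h1 h2
    exact key r (by omega) h2
  have hqp : p < q := by
    rcases Nat.eq_or_lt_of_le hpq with h | h
    · exfalso; rw [← h] at hqle; omega
    · exact h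
  have hq_strict : wsum w p < wsum w q := hstrict q hqp le_rfl
  have hstep3 := wsum_step_le w q
  have hret : wsum w (q + 1) = wsum w p := by omega
  have hfr : fret w p = q := fret_eq hqp hret hstrict
  have hwq : w q = false := by
    by_contra h
    have : w q = true := by simpa using h
    rw [wsum_succ, this] at hret
    simp at hret
    omega
  rw [hfr]
  exact ⟨hqp, hqN, hret, hstrict, hwq⟩

lemma fret_inj (hB : Bal w N) {p1 p2 : ℕ} (h1 : p1 < N) (hw1 : w p1 = true)
    (h2 : p2 < N) (hw2 : w p2 = true) (heq : fret w p1 = fret w p2) : p1 = p2 := by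
  by_contra hne
  wlog hlt : p1 < p2 generalizing p1 p2
  · exact this h2 hw2 h1 hw1 heq.symm (Ne.symm hne) (by omega)
  obtain ⟨hq1, _, hr1, hs1, _⟩ := first_return_exists hB h1 hw1
  obtain ⟨hq2, _, hr2, _, _⟩ := first_return_exists hB h2 hw2
  have hp2le : p2 ≤ fret w p1 := by rw [heq]; omega
  have := hs1 p2 hlt hp2le
  rw [heq] at hr1
  omega

lemma closer_has_opener (hB : Bal w N) {q : ℕ} (hq : q < N) (hwq : w q = false) :
    ∃ p, p < q ∧ w p = true ∧ fret w p = q := by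
  set c := wsum w (q + 1) with hc
  have hc0 : 0 ≤ c := hB.1 (q + 1) (by omega)
  have hwsq : wsum w q = c + 1 := by
    rw [hc, wsum_succ, hwq]; simp
  set P : ℕ → Prop := fun k => wsum w k ≤ c with hP
  have h0 : P 0 := by rw [hP]; simp [wsum_zero]; omega
  set p := Nat.findGreatest P q with hp
  have hspec : P p := Nat.findGreatest_spec (Nat.zero_le q) h0
  have hple : p ≤ q := Nat.findGreatest_le q
  have hpq : p < q := by
    rcases Nat.eq_or_lt_of_le hple with h | h
    · exfalso; rw [hP] at hspec; rw [h] at hspec; omega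
    · exact h
  have hgt : ∀ r, p < r → r ≤ q → c < wsum w r := by
    intro r hr1 hr2
    have := Nat.findGreatest_is_greatest (P := P) (n := q) (k := r) (by omega) hr2
    rw [hP] at this; simp at this; omega
  have hstep := wsum_step_le w p
  have hp1 : wsum w (p + 1) = c + 1 ∧ wsum w p = c := by
    have h1 := hgt (p + 1) (by omega) (by omega)
    rw [hP] at hspec
    omega
  have hwp : w p = true := by
    by_contra h
    have h' : w p = false := by simpa using h
    rw [wsum_succ, h'] at hp1
    simp at hp1
    omega
  refine ⟨p, hpq, hwp, fret_eq hpq (by omega) ?_⟩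
  intro r hr1 hr2
  have := hgt r hr1 hr2
  omega

end FirstReturn

/-! ### The canonical noncrossing matching of a balanced word -/

noncomputable def Mw (w : ℕ → Bool) (N : ℕ) : Finset (Finset ℕ) :=
  ((range N).filter (fun p => w p = true)).image (fun p => {p, fret w p})

section MwProps

variable {w : ℕ → Bool} {N : ℕ}

lemma Mw_mem {b : Finset ℕ} (hb : b ∈ Mw w N) :
    ∃ p, p < N ∧ w p = true ∧ b = {p, fret w p} := by
  obtain ⟨p, hp, rfl⟩ := Finset.mem_image.1 hb
  rw [Finset.mem_filter, Finset.mem_range] at hp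
  exact ⟨p, hp.1, hp.2, rfl⟩

lemma Mw_mem_of {p : ℕ} (hp : p < N) (hw : w p = true) : ({p, fret w p} : Finset ℕ) ∈ Mw w N :=
  Finset.mem_image.2 ⟨p, Finset.mem_filter.2 ⟨Finset.mem_range.2 hp, hw⟩, rfl⟩

lemma Mw_card (hB : Bal w N) {b : Finset ℕ} (hb : b ∈ Mw w N) : b.card = 2 := by
  obtain ⟨p, hp, hw, rfl⟩ := Mw_mem hb
  obtain ⟨h1, _, _, _, _⟩ := first_return_exists hB hp hw
  rw [Finset.card_insert_of_notMem (by simp; omega), Finset.card_singleton]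

lemma Mw_subset (hB : Bal w N) {b : Finset ℕ} (hb : b ∈ Mw w N) : b ⊆ range N := by
  obtain ⟨p, hp, hw, rfl⟩ := Mw_mem hb
  obtain ⟨_, h2, _, _, _⟩ := first_return_exists hB hp hw
  intro t ht
  simp only [Finset.mem_insert, Finset.mem_singleton] at ht
  rcases ht with rfl | rfl <;> simp [Finset.mem_range] <;> omega

lemma Mw_filter_opener (hB : Bal w N) {i : ℕ} (hi : i < N) (hw : w i = true) :
    (Mw w N).filter (fun b => i ∈ b) = {({i, fret w i} : Finset ℕ)} := by
  ext b
  simp only [Finset.mem_filter, Finset.mem_singleton]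
  constructor
  · rintro ⟨hb, hib⟩
    obtain ⟨p, hp, hwp, rfl⟩ := Mw_mem hb
    simp only [Finset.mem_insert, Finset.mem_singleton] at hib
    rcases hib with rfl | rfl
    · rfl
    · obtain ⟨_, _, _, _, h5⟩ := first_return_exists hB hp hwp
      rw [hw] at h5; cases h5
  · rintro rfl
    exact ⟨Mw_mem_of hi hw, by simp⟩

lemma Mw_filter_closer (hB : Bal w N) {i : ℕ} (hi : i < N) (hw : w i = false) :
    ∃ p, p < i ∧ w p = true ∧ fret w p = i ∧
      (Mw w N).filter (fun b => i ∈ b) = {({p, i} : Finset ℕ)} := by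
  obtain ⟨p, hpi, hwp, hf⟩ := closer_has_opener hB hi hw
  refine ⟨p, hpi, hwp, hf, ?_⟩
  ext b
  simp only [Finset.mem_filter, Finset.mem_singleton]
  constructor
  · rintro ⟨hb, hib⟩
    obtain ⟨p', hp', hwp', rfl⟩ := Mw_mem hb
    simp only [Finset.mem_insert, Finset.mem_singleton] at hib
    rcases hib with rfl | hib
    · rw [hwp'] at hw; cases hw
    · have : p' = p := fret_inj hB hp' hwp' (by omega) hwp (by rw [← hib, hf])
      subst this
      rw [hib]
  · rintro rfl
    rw [← hf]
    exact ⟨Mw_mem_of (by omega) hwp, by simp⟩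

lemma Mw_isPartition (hB : Bal w N) : IsPartitionOf N (Mw w N) := by
  constructor
  · intro b hb
    refine ⟨Mw_subset hB hb, ?_⟩
    obtain ⟨p, _, _, rfl⟩ := Mw_mem hb
    exact ⟨p, by simp⟩
  · intro i hi
    rw [Finset.mem_range] at hi
    by_cases hw : w i = true
    · rw [Mw_filter_opener hB hi hw, Finset.card_singleton]
    · have hw' : w i = false := by simpa using hw
      obtain ⟨p, _, _, _, heq⟩ := Mw_filter_closer hB hi hw'
      rw [heq, Finset.card_singleton]

lemma Mw_isArc (hB : Bal w N) {i j : ℕ} (h : IsArc (Mw w N) i j) :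
    i < N ∧ w i = true ∧ j = fret w i := by
  obtain ⟨hij, b, hb, hib, hjb, _⟩ := h
  obtain ⟨p, hp, hwp, rfl⟩ := Mw_mem hb
  obtain ⟨h1, h2, _, _, _⟩ := first_return_exists hB hp hwp
  simp only [Finset.mem_insert, Finset.mem_singleton] at hib hjb
  rcases hib with rfl | rfl <;> rcases hjb with rfl | rfl
  · omega
  · exact ⟨hp, hwp, rfl⟩
  · omega
  · omega

lemma Mw_crossNum (hB : Bal w N) : crossNum N (Mw w N) = 0 := by
  rw [crossNum, Finset.card_eq_zero, Finset.filter_eq_empty_iff]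
  rintro ⟨⟨i, j⟩, ⟨k, l⟩⟩ _
  rintro ⟨harc1, harc2, h1, h2, h3⟩
  simp only at harc1 harc2 h1 h2 h3
  obtain ⟨hiN, hwi, rfl⟩ := Mw_isArc hB harc1
  obtain ⟨hkN, hwk, rfl⟩ := Mw_isArc hB harc2
  obtain ⟨hi1, hi2, hi3, hi4, _⟩ := first_return_exists hB hiN hwi
  obtain ⟨hk1, hk2, hk3, hk4, _⟩ := first_return_exists hB hkN hwk
  -- i < k < fret i < fret l
  have e1 : wsum w i < wsum w k := hi4 k h1 (by omega)
  have e2 : wsum w k < wsum w (fret w i + 1) := hk4 (fret w i + 1) (by omega) (by omega)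
  omega

end MwProps

/-! ### Partner function of a matching -/

lemma sum_pm (w : ℕ → Bool) (s : Finset ℕ) :
    (∑ t ∈ s, (if w t then (1:ℤ) else -1))
      = ((s.filter (fun t => w t = true)).card : ℤ)
        - ((s.filter (fun t => w t = false)).card : ℤ) := by
  rw [← Finset.sum_filter_add_sum_filter_not s (fun t => w t = true)]
  have h1 : ∀ t ∈ s.filter (fun t => w t = true), (if w t then (1:ℤ) else -1) = 1 := by
    intro t ht; rw [Finset.mem_filter] at ht; simp [ht.2]
  have h2 : ∀ t ∈ s.filter (fun t => ¬ (w t = true)), (if w t then (1:ℤ) else -1) = -1 := by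
    intro t ht; rw [Finset.mem_filter] at ht
    have : w t = false := by simpa using ht.2
    simp [this]
  rw [Finset.sum_congr rfl h1, Finset.sum_congr rfl h2]
  have h3 : s.filter (fun t => ¬ (w t = true)) = s.filter (fun t => w t = false) := by
    apply Finset.filter_congr; intro t _; simp
  rw [h3]
  push_cast
  simp
  omega

lemma wsum_pm (w : ℕ → Bool) (r : ℕ) :
    wsum w r = (((range r).filter (fun t => w t = true)).card : ℤ)
      - (((range r).filter (fun t => w t = false)).card : ℤ) := sum_pm w (range r)

noncomputable def blk (P : Finset (Finset ℕ)) (i : ℕ) : Finset ℕ :=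
  if h : ∃ b, b ∈ P ∧ i ∈ b then h.choose else ∅

noncomputable def ptr (P : Finset (Finset ℕ)) (i : ℕ) : ℕ :=
  sInf {k | k ∈ blk P i ∧ k ≠ i}

noncomputable def wp (P : Finset (Finset ℕ)) (i : ℕ) : Bool :=
  decide (i < ptr P i)

section PtrSection

variable {N : ℕ} {P : Finset (Finset ℕ)}

lemma block_unique (hpart : IsPartitionOf N P) {b b' : Finset ℕ} {i : ℕ} (hi : i < N)
    (hb : b ∈ P) (hb' : b' ∈ P) (hib : i ∈ b) (hib' : i ∈ b') : b = b' := by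
  have h := hpart.2 i (Finset.mem_range.2 hi)
  have hle : (P.filter fun b => i ∈ b).card ≤ 1 := h.le
  exact Finset.card_le_one.1 hle b (Finset.mem_filter.2 ⟨hb, hib⟩)
    b' (Finset.mem_filter.2 ⟨hb', hib'⟩)

lemma exists_block (hpart : IsPartitionOf N P) {i : ℕ} (hi : i < N) :
    ∃ b, b ∈ P ∧ i ∈ b := by
  have h := hpart.2 i (Finset.mem_range.2 hi)
  have : (P.filter fun b => i ∈ b).Nonempty := Finset.card_pos.1 (by omega)
  obtain ⟨b, hb⟩ := this
  rw [Finset.mem_filter] at hb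
  exact ⟨b, hb.1, hb.2⟩

lemma blk_spec (hpart : IsPartitionOf N P) {i : ℕ} (hi : i < N) :
    blk P i ∈ P ∧ i ∈ blk P i := by
  rw [blk, dif_pos (exists_block hpart hi)]
  exact (exists_block hpart hi).choose_spec

lemma blk_eq (hpart : IsPartitionOf N P) {i : ℕ} (hi : i < N) {b : Finset ℕ}
    (hb : b ∈ P) (hib : i ∈ b) : blk P i = b :=
  block_unique hpart hi (blk_spec hpart hi).1 hb (blk_spec hpart hi).2 hib

lemma ptr_spec (hpart : IsPartitionOf N P) (hcard : ∀ b ∈ P, b.card = 2)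
    {i : ℕ} (hi : i < N) :
    ptr P i ≠ i ∧ blk P i = {i, ptr P i} := by
  obtain ⟨hbP, hib⟩ := blk_spec hpart hi
  obtain ⟨x, y, hxy, hb⟩ := Finset.card_eq_two.1 (hcard _ hbP)
  rw [hb] at hib
  simp only [Finset.mem_insert, Finset.mem_singleton] at hib
  have key : ∀ o, o ≠ i → blk P i = {i, o} → ptr P i = o ∧ ptr P i ≠ i := by
    intro o ho hbo
    have hset : {k | k ∈ blk P i ∧ k ≠ i} = ({o} : Set ℕ) := by
      ext k
      simp only [hbo, Finset.mem_insert, Finset.mem_singleton, Set.mem_setOf_eq,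
        Set.mem_singleton_iff]
      constructor
      · rintro ⟨h1 | h1, h2⟩
        · exact absurd h1 h2
        · exact h1
      · rintro rfl; exact ⟨Or.inr rfl, ho⟩
    have hs : sInf ({o} : Set ℕ) = o := csInf_singleton o
    rw [ptr, hset, hs]
    exact ⟨rfl, ho⟩
  rcases hib with rfl | rfl
  · have := key y (fun h => hxy h.symm) (by rw [hb])
    refine ⟨this.2, ?_⟩
    rw [hb, this.1]
  · have := key x hxy (by rw [hb]; ext t; simp; tauto)
    refine ⟨this.2, ?_⟩
    rw [hb, this.1]
    ext t; simp; tauto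

lemma ptr_ne (hpart : IsPartitionOf N P) (hcard : ∀ b ∈ P, b.card = 2)
    {i : ℕ} (hi : i < N) : ptr P i ≠ i := (ptr_spec hpart hcard hi).1

lemma ptr_block (hpart : IsPartitionOf N P) (hcard : ∀ b ∈ P, b.card = 2)
    {i : ℕ} (hi : i < N) : ({i, ptr P i} : Finset ℕ) ∈ P := by
  have h := (ptr_spec hpart hcard hi).2
  rw [← h]
  exact (blk_spec hpart hi).1

lemma ptr_lt (hpart : IsPartitionOf N P) (hcard : ∀ b ∈ P, b.card = 2)
    {i : ℕ} (hi : i < N) : ptr P i < N := by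
  have h := (ptr_spec hpart hcard hi).2
  have hm : ptr P i ∈ blk P i := by rw [h]; simp
  have := (hpart.1 _ (blk_spec hpart hi).1).1 hm
  exact Finset.mem_range.1 this

lemma ptr_invol (hpart : IsPartitionOf N P) (hcard : ∀ b ∈ P, b.card = 2)
    {i : ℕ} (hi : i < N) : ptr P (ptr P i) = i := by
  have hlt := ptr_lt hpart hcard hi
  have h1 := (ptr_spec hpart hcard hi).2
  have h2 := (ptr_spec hpart hcard hlt).2
  have hmem : ptr P i ∈ blk P i := by rw [h1]; simp
  have hbe : blk P (ptr P i) = blk P i :=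
    blk_eq hpart hlt (blk_spec hpart hi).1 hmem
  rw [hbe, h1] at h2
  -- {i, ptr i} = {ptr i, ptr (ptr i)}
  have : i ∈ ({ptr P i, ptr P (ptr P i)} : Finset ℕ) := by rw [← h2]; simp
  simp only [Finset.mem_insert, Finset.mem_singleton] at this
  rcases this with h | h
  · exact absurd h.symm (ptr_ne hpart hcard hi)
  · exact h.symm

lemma blk_eq_pair (hpart : IsPartitionOf N P) (hcard : ∀ b ∈ P, b.card = 2)
    {i : ℕ} (hi : i < N) {b : Finset ℕ} (hb : b ∈ P) (hib : i ∈ b) :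
    b = {i, ptr P i} := by
  rw [← (ptr_spec hpart hcard hi).2]
  exact (blk_eq hpart hi hb hib).symm

lemma wp_true_iff {i : ℕ} : wp P i = true ↔ i < ptr P i := by simp [wp]

lemma wp_false_iff {i : ℕ} : wp P i = false ↔ ptr P i ≤ i := by simp [wp]

/-- nonnegativity of partial sums of the word of a matching -/
lemma wp_nonneg (hpart : IsPartitionOf N P) (hcard : ∀ b ∈ P, b.card = 2)
    {r : ℕ} (hr : r ≤ N) : 0 ≤ wsum (wp P) r := by
  rw [wsum_pm]
  have hle : ((range r).filter (fun t => wp P t = false)).card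
      ≤ ((range r).filter (fun t => wp P t = true)).card := by
    apply Finset.card_le_card_of_injOn (ptr P)
    · intro t ht
      rw [Finset.mem_coe, Finset.mem_filter, Finset.mem_range, wp_false_iff] at ht
      obtain ⟨htr, hpt⟩ := ht
      have htN : t < N := by omega
      have hne := ptr_ne hpart hcard htN
      have hlt : ptr P t < t := by omega
      rw [Finset.mem_coe, Finset.mem_filter, Finset.mem_range, wp_true_iff]
      have : ptr P (ptr P t) = t := ptr_invol hpart hcard htN
      constructor
      · omega
      · omega
    · intro a ha b hb hab
      simp only [Finset.coe_filter, Set.mem_setOf_eq, Finset.mem_range] at ha hb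
      have haN : a < N := by omega
      have hbN : b < N := by omega
      have := ptr_invol hpart hcard haN
      have := ptr_invol hpart hcard hbN
      rw [← ptr_invol hpart hcard haN, hab, ptr_invol hpart hcard hbN]
  omega

lemma wp_balance (hpart : IsPartitionOf N P) (hcard : ∀ b ∈ P, b.card = 2) :
    wsum (wp P) N = 0 := by
  rw [wsum_pm]
  have hle2 : ((range N).filter (fun t => wp P t = true)).card
      ≤ ((range N).filter (fun t => wp P t = false)).card := by
    apply Finset.card_le_card_of_injOn (ptr P)
    · intro t ht
      rw [Finset.mem_coe, Finset.mem_filter, Finset.mem_range, wp_true_iff] at ht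
      obtain ⟨htr, hpt⟩ := ht
      have := ptr_invol hpart hcard htr
      have := ptr_lt hpart hcard htr
      rw [Finset.mem_coe, Finset.mem_filter, Finset.mem_range, wp_false_iff]
      omega
    · intro a ha b hb hab
      simp only [Finset.coe_filter, Set.mem_setOf_eq, Finset.mem_range] at ha hb
      rw [← ptr_invol hpart hcard ha.1, hab, ptr_invol hpart hcard hb.1]
  have hge := wp_nonneg hpart hcard (le_refl N)
  rw [wsum_pm] at hge
  omega

lemma wp_Bal (hpart : IsPartitionOf N P) (hcard : ∀ b ∈ P, b.card = 2) :
    Bal (wp P) N :=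
  ⟨fun r hr => wp_nonneg hpart hcard hr, wp_balance hpart hcard⟩

lemma no_cross (hpart : IsPartitionOf N P) (hcard : ∀ b ∈ P, b.card = 2)
    (hcr : crossNum N P = 0) {i k : ℕ} (hi : i < N) (hk : k < N)
    (hwi : i < ptr P i) (hwk : k < ptr P k)
    (h1 : i < k) (h2 : k < ptr P i) (h3 : ptr P i < ptr P k) : False := by
  rw [crossNum, Finset.card_eq_zero, Finset.filter_eq_empty_iff] at hcr
  have harc : ∀ p, p < N → p < ptr P p → IsArc P p (ptr P p) := by
    intro p hp hpp
    refine ⟨hpp, {p, ptr P p}, ptr_block hpart hcard hp, by simp, by simp, ?_⟩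
    intro t ht
    simp only [Finset.mem_insert, Finset.mem_singleton] at ht
    rcases ht with rfl | rfl <;> omega
  have hmem : (((i, ptr P i), (k, ptr P k)) : (ℕ × ℕ) × (ℕ × ℕ)) ∈
      ((range N ×ˢ range N) ×ˢ (range N ×ˢ range N)) := by
    have := ptr_lt hpart hcard hi
    have := ptr_lt hpart hcard hk
    simp only [Finset.mem_product, Finset.mem_range]
    refine ⟨⟨hi, ?_⟩, hk, ?_⟩ <;> omega
  exact hcr hmem ⟨harc i hi hwi, harc k hk hwk, h1, h2, h3⟩

lemma interval_closed (hpart : IsPartitionOf N P) (hcard : ∀ b ∈ P, b.card = 2)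
    (hcr : crossNum N P = 0) {p t : ℕ} (hp : p < N) (hwp : p < ptr P p)
    (h1 : p < t) (h2 : t < ptr P p) : p < ptr P t ∧ ptr P t < ptr P p := by
  have hq := ptr_lt hpart hcard hp
  have htN : t < N := by omega
  have hinv := ptr_invol hpart hcard htN
  have hne := ptr_ne hpart hcard htN
  have hne1 : ptr P t ≠ p := by
    intro h
    have : ptr P p = t := by rw [← h, hinv]
    omega
  have hne2 : ptr P t ≠ ptr P p := by
    intro h
    have := ptr_invol hpart hcard hp
    have : t = p := by rw [← hinv, h, this]
    omega
  rcases Nat.lt_or_ge (ptr P t) p with hlt | hge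
  · -- ptr t < p : crossing (ptr t, t) vs (p, ptr p)
    exfalso
    have hptN : ptr P t < N := by omega
    have hw1 : ptr P t < ptr P (ptr P t) := by rw [hinv]; omega
    exact no_cross hpart hcard hcr hptN hp hw1 hwp hlt (by omega) (by omega)
  · rcases Nat.lt_or_ge (ptr P p) (ptr P t) with hgt | hle2
    · -- ptr t > ptr p : crossing (p, ptr p) vs (t, ptr t)
      exfalso
      have hwt : t < ptr P t := by
        rcases Nat.lt_or_ge t (ptr P t) with h | h
        · exact h
        · -- ptr t < t : but ptr t ≥ p, ptr t ≠ p so ptr t > p; also ptr t > ptr p > t, contra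
          omega
      exact no_cross hpart hcard hcr hp htN hwp hwt h1 h2 hgt
    · omega

/-- the partner of an opener in a noncrossing matching is the first return -/
lemma fret_eq_ptr (hpart : IsPartitionOf N P) (hcard : ∀ b ∈ P, b.card = 2)
    (hcr : crossNum N P = 0) {p : ℕ} (hp : p < N) (hwp : p < ptr P p) :
    fret (wp P) p = ptr P p := by
  set q := ptr P p with hq
  have hqN : q < N := ptr_lt hpart hcard hp
  apply fret_eq hwp
  · -- return : wsum (q+1) = wsum p
    rw [wsum_eq_add (wp P) (show p ≤ q + 1 by omega)]
    have hsplit1 : (∑ t ∈ Ico p (q + 1), (if wp P t then (1:ℤ) else -1))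
        = (∑ t ∈ Ico p q, (if wp P t then (1:ℤ) else -1)) + (if wp P q then (1:ℤ) else -1) :=
      Finset.sum_Ico_succ_top (by omega) _
    have hsplit2 : (∑ t ∈ Ico p q, (if wp P t then (1:ℤ) else -1))
        = (if wp P p then (1:ℤ) else -1) + (∑ t ∈ Ico (p + 1) q, (if wp P t then (1:ℤ) else -1)) :=
      Finset.sum_eq_sum_Ico_succ_bot (by omega) _
    have hmid : (∑ t ∈ Ico (p + 1) q, (if wp P t then (1:ℤ) else -1)) = 0 := by
      apply Finset.sum_involution (fun t _ => ptr P t)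
      · intro t ht
        rw [Finset.mem_Ico] at ht
        have htN : t < N := by omega
        have hne := ptr_ne hpart hcard htN
        have hinv := ptr_invol hpart hcard htN
        by_cases h : t < ptr P t
        · have h1 : wp P t = true := wp_true_iff.2 h
          have h2 : wp P (ptr P t) = false := wp_false_iff.2 (by omega)
          rw [h1, h2]; simp
        · have h1 : wp P t = false := wp_false_iff.2 (by omega)
          have h2 : wp P (ptr P t) = true := wp_true_iff.2 (by omega)
          rw [h1, h2]; simp
      · intro t ht _
        exact ptr_ne hpart hcard (by rw [Finset.mem_Ico] at ht; omega)
      · intro t ht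
        rw [Finset.mem_Ico] at ht
        have := interval_closed hpart hcard hcr hp hwp (show p < t by omega) (show t < q by omega)
        rw [Finset.mem_Ico]
        omega
      · intro t ht
        exact ptr_invol hpart hcard (by rw [Finset.mem_Ico] at ht; omega)
    have hwpp : wp P p = true := wp_true_iff.2 hwp
    have hwpq : wp P q = false := by
      rw [wp_false_iff, hq, ptr_invol hpart hcard hp]
      omega
    rw [hsplit1, hsplit2, hmid, hwpp, hwpq]
    simp
  · -- strictness
    intro r hr1 hr2
    rw [wsum_eq_add (wp P) (show p + 1 ≤ r by omega), wsum_succ]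
    have hwpp : wp P p = true := wp_true_iff.2 hwp
    rw [hwpp]
    have hpos : 0 ≤ ∑ t ∈ Ico (p + 1) r, (if wp P t then (1:ℤ) else -1) := by
      rw [sum_pm]
      have hle : ((Ico (p+1) r).filter (fun t => wp P t = false)).card
          ≤ ((Ico (p+1) r).filter (fun t => wp P t = true)).card := by
        apply Finset.card_le_card_of_injOn (ptr P)
        · intro t ht
          rw [Finset.mem_coe, Finset.mem_filter, Finset.mem_Ico, wp_false_iff] at ht
          obtain ⟨⟨ht1, ht2⟩, hpt⟩ := ht
          have htN : t < N := by omega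
          have hne := ptr_ne hpart hcard htN
          have hinv := ptr_invol hpart hcard htN
          have hcl := interval_closed hpart hcard hcr hp hwp (show p < t by omega)
            (show t < q by omega)
          rw [Finset.mem_coe, Finset.mem_filter, Finset.mem_Ico, wp_true_iff]
          refine ⟨⟨by omega, by omega⟩, by omega⟩
        · intro a ha b hb hab
          simp only [Finset.coe_filter, Set.mem_setOf_eq, Finset.mem_Ico] at ha hb
          have haN : a < N := by omega
          have hbN : b < N := by omega
          rw [← ptr_invol hpart hcard haN, hab, ptr_invol hpart hcard hbN]
      omega
    simp
    omega

lemma P_eq_Mw (hpart : IsPartitionOf N P) (hcard : ∀ b ∈ P, b.card = 2)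
    (hcr : crossNum N P = 0) : P = Mw (wp P) N := by
  ext b
  constructor
  · intro hb
    obtain ⟨i, hib⟩ := (hpart.1 b hb).2
    have hi : i < N := Finset.mem_range.1 ((hpart.1 b hb).1 hib)
    have hbeq := blk_eq_pair hpart hcard hi hb hib
    have hne := ptr_ne hpart hcard hi
    rcases Nat.lt_or_ge i (ptr P i) with hop | hcl
    · rw [hbeq, ← fret_eq_ptr hpart hcard hcr hi hop]
      exact Mw_mem_of hi (wp_true_iff.2 hop)
    · set p := ptr P i with hpdef
      have hpN : p < N := ptr_lt hpart hcard hi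
      have hinv : ptr P p = i := ptr_invol hpart hcard hi
      have hop : p < ptr P p := by omega
      have hbeq2 : b = {p, ptr P p} := by
        rw [hbeq, hinv]
        ext t; simp; tauto
      rw [hbeq2, ← fret_eq_ptr hpart hcard hcr hpN hop]
      exact Mw_mem_of hpN (wp_true_iff.2 hop)
  · intro hb
    obtain ⟨p, hpN, hwp, rfl⟩ := Mw_mem hb
    have hop : p < ptr P p := wp_true_iff.1 hwp
    rw [fret_eq_ptr hpart hcard hcr hpN hop]
    exact ptr_block hpart hcard hpN

end PtrSection

/-! ### Words attached to closer-count vectors -/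

section Decode

variable {m : ℕ}

lemma wsum_congr {w1 w2 : ℕ → Bool} {r : ℕ} (h : ∀ t, t < r → w1 t = w2 t) :
    wsum w1 r = wsum w2 r := by
  apply Finset.sum_congr rfl
  intro t ht
  rw [h t (Finset.mem_range.1 ht)]

lemma fret_congr {w1 w2 : ℕ → Bool} {N p : ℕ} (hN : ∀ t, t < N → w1 t = w2 t)
    (hB : Bal w1 N) (hp : p < N) (hw : w1 p = true) :
    fret w2 p = fret w1 p := by
  obtain ⟨h1, h2, h3, h4, _⟩ := first_return_exists hB hp hw
  apply fret_eq h1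
  · rw [← wsum_congr (fun t ht => hN t (by omega)),
      ← wsum_congr (w1 := w1) (w2 := w2) (fun t ht => hN t (by omega))]
    exact h3
  · intro r hr1 hr2
    rw [← wsum_congr (w1 := w1) (w2 := w2) (fun t ht => hN t (by omega)),
      ← wsum_congr (w1 := w1) (w2 := w2) (fun t ht => hN t (by omega))]
    exact h4 r hr1 hr2

lemma Mw_congr {w1 w2 : ℕ → Bool} {N : ℕ} (hN : ∀ t, t < N → w1 t = w2 t)
    (hB : Bal w1 N) : Mw w1 N = Mw w2 N := by
  rw [Mw, Mw]
  have hf : (range N).filter (fun p => w1 p = true)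
      = (range N).filter (fun p => w2 p = true) := by
    apply Finset.filter_congr
    intro p hp
    rw [hN p (Finset.mem_range.1 hp)]
  rw [← hf]
  apply Finset.image_congr
  intro p hp
  simp only [Finset.coe_filter, Set.mem_setOf_eq, Finset.mem_range] at hp
  show ({p, fret w1 p} : Finset ℕ) = {p, fret w2 p}
  rw [fret_congr hN hB hp.1 hp.2]

/-- splitting closer counts at box boundaries -/
lemma card_filter_split (c : ℕ → Prop) [DecidablePred c] {v r : ℕ} (h2 : v ≤ r) :
    ((range r).filter c).card
      = ((range v).filter c).card + ((Ico v r).filter c).card := by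
  have hd : Disjoint ((Ico 0 v).filter c) ((Ico v r).filter c) :=
    Finset.disjoint_filter_filter (Finset.Ico_disjoint_Ico_consecutive 0 v r)
  rw [Finset.range_eq_Ico, ← Finset.Ico_union_Ico_eq_Ico (Nat.zero_le v) h2,
    Finset.filter_union, Finset.card_union_of_disjoint hd, Finset.range_eq_Ico]

/-- a "closers-first" predicate on an interval occupies an initial segment -/
lemma prefix_lemma (c : ℕ → Prop) [DecidablePred c] (u e : ℕ)
    (hshape : ∀ i, u ≤ i → i + 1 < e → c (i + 1) → c i) :
    (Ico u e).filter c = Ico u (u + ((Ico u e).filter c).card) := by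
  set S := (Ico u e).filter c with hS
  rcases Finset.eq_empty_or_nonempty S with h | h
  · rw [h]; simp
  have hM := Finset.max'_mem S h
  set M := S.max' h with hMdef
  have hMmem : M ∈ Ico u e ∧ c M := by
    have := hM
    rw [hS, Finset.mem_filter] at this
    exact this
  obtain ⟨hMIco, hMc⟩ := hMmem
  obtain ⟨hMu, hMe⟩ := Finset.mem_Ico.1 hMIco
  have hsub : Ico u (M + 1) ⊆ S := by
    intro t ht
    rw [Finset.mem_Ico] at ht
    obtain ⟨ht1, ht2⟩ := ht
    have key : ∀ d, u ≤ M - d → (M - d) ∈ S := by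
      intro d
      induction d with
      | zero => intro _; simpa using hM
      | succ d ih =>
        intro hd
        have hdle : u ≤ M - d := by omega
        have hSd := ih hdle
        have hmem2 : c (M - d) := by
          have h7 := hSd
          rw [hS, Finset.mem_filter] at h7
          exact h7.2
        rcases Nat.lt_or_ge M (d + 1) with hc | hc
        · have heq2 : M - (d + 1) = M - d := by omega
          rw [heq2]; exact hSd
        · have hstep : M - (d + 1) + 1 = M - d := by omega
          have hcm : c (M - (d + 1)) :=
            hshape _ hd (by omega) (by rw [hstep]; exact hmem2)
          rw [hS, Finset.mem_filter, Finset.mem_Ico]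
          exact ⟨⟨hd, by omega⟩, hcm⟩
    have h8 := key (M - t) (by omega)
    have he : M - (M - t) = t := by omega
    rw [he] at h8
    exact h8
  have hsup : S ⊆ Ico u (M + 1) := by
    intro t ht
    have h1 := Finset.le_max' S t ht
    rw [hS, Finset.mem_filter, Finset.mem_Ico] at ht
    rw [Finset.mem_Ico]
    omega
  have heq : S = Ico u (M + 1) := Finset.Subset.antisymm hsup hsub
  have hcard : S.card = M + 1 - u := by rw [heq, Nat.card_Ico]
  rw [hcard, heq]
  congr 1
  omega

variable (n : Fin m → ℕ)

/-- opener/closer word determined by per-box closer counts `a` -/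
noncomputable def wa (a : Fin m → ℕ) (i : ℕ) : Bool :=
  decide (¬ ∃ j, j < m ∧ Psum n j ≤ i ∧ i < Psum n j + np a j)

lemma wa_false_iff (a : Fin m → ℕ) (i : ℕ) :
    wa n a i = false ↔ ∃ j, j < m ∧ Psum n j ≤ i ∧ i < Psum n j + np a j := by
  simp [wa]

/-- within box `j`, the closers of `wa` are exactly the first `a j` positions -/
lemma wa_false_in_box (a : Fin m → ℕ) (ha : ∀ t : Fin m, a t ≤ n t)
    {j i : ℕ} (hj : j < m) (h1 : Psum n j ≤ i) (h2 : i < Psum n (j + 1)) :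
    (wa n a i = false ↔ i < Psum n j + np a j) := by
  rw [wa_false_iff]
  constructor
  · rintro ⟨j', hj', hj1, hj2⟩
    have hle : np a j' ≤ np n j' := by
      rw [np, np, dif_pos hj', dif_pos hj']
      exact ha _
    have hbox : Psum n j' ≤ i ∧ i < Psum n (j' + 1) := by
      rw [Psum_succ]
      omega
    have hjj : j' = j := box_unique hj' hj hbox.1 hbox.2 h1 h2
    subst hjj
    omega
  · intro h
    exact ⟨j, hj, h1, h⟩

/-- count of closers of `wa` below `r`, for `r` inside box `j` -/
lemma wa_closers_below (a : Fin m → ℕ) (ha : ∀ t : Fin m, a t ≤ n t) :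
    ∀ j, j ≤ m → ((range (Psum n j)).filter (fun i => wa n a i = false)).card = Psum a j := by
  intro j
  induction j with
  | zero => intro _; simp [Psum]
  | succ j ih =>
    intro hj
    have hj' : j < m := by omega
    rw [card_filter_split _ (Psum_mono (n := n) (show j ≤ j + 1 by omega)),
      ih (by omega)]
    have hbox : (Ico (Psum n j) (Psum n (j + 1))).filter (fun i => wa n a i = false)
        = Ico (Psum n j) (Psum n j + np a j) := by
      ext i
      rw [Finset.mem_filter, Finset.mem_Ico, Finset.mem_Ico]
      constructor
      · rintro ⟨⟨hi1, hi2⟩, hi3⟩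
        exact ⟨hi1, (wa_false_in_box n a ha hj' hi1 hi2).1 hi3⟩
      · rintro ⟨hi1, hi2⟩
        have hle : np a j ≤ np n j := by
          rw [np, np, dif_pos hj', dif_pos hj']
          exact ha _
        have hi2' : i < Psum n (j + 1) := by rw [Psum_succ]; omega
        exact ⟨⟨hi1, hi2'⟩, (wa_false_in_box n a ha hj' hi1 hi2').2 hi2⟩
    rw [hbox, Nat.card_Ico, Psum_succ]
    omega

lemma wa_closers_mid (a : Fin m → ℕ) (ha : ∀ t : Fin m, a t ≤ n t)
    {j r : ℕ} (hj : j < m) (h1 : Psum n j ≤ r) (h2 : r ≤ Psum n (j + 1)) :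
    ((range r).filter (fun i => wa n a i = false)).card
      = Psum a j + min (np a j) (r - Psum n j) := by
  rw [card_filter_split _ h1, wa_closers_below n a ha j (by omega)]
  have hle : np a j ≤ np n j := by
    rw [np, np, dif_pos hj, dif_pos hj]
    exact ha _
  have hbox : (Ico (Psum n j) r).filter (fun i => wa n a i = false)
      = Ico (Psum n j) (min r (Psum n j + np a j)) := by
    ext i
    rw [Finset.mem_filter, Finset.mem_Ico, Finset.mem_Ico]
    constructor
    · rintro ⟨⟨hi1, hi2⟩, hi3⟩
      have hi2' : i < Psum n (j + 1) := by omega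
      have := (wa_false_in_box n a ha hj hi1 hi2').1 hi3
      omega
    · rintro ⟨hi1, hi2⟩
      have hi2' : i < Psum n (j + 1) := by rw [Psum_succ]; omega
      refine ⟨⟨hi1, by omega⟩, (wa_false_in_box n a ha hj hi1 hi2').2 (by omega)⟩
  rw [hbox, Nat.card_Ico]
  omega

/-- generic formula : wsum in terms of closer count -/
lemma wsum_eq_sub (w : ℕ → Bool) (r : ℕ) :
    wsum w r = (r : ℤ) - 2 * ((range r).filter (fun t => w t = false)).card := by
  rw [wsum_pm]
  have := Finset.card_filter_add_card_filter_not (s := range r)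
    (p := fun t => w t = true)
  have h2 : (range r).filter (fun t => ¬ (w t = true)) = (range r).filter (fun t => w t = false) := by
    apply Finset.filter_congr; intro t _; simp
  rw [h2] at this
  rw [Finset.card_range] at this
  omega

/-- validity conditions on closer count vectors -/
def okA (h : ℕ) (a : Fin m → ℕ) : Prop :=
  (∀ j : Fin m, 2 * psum a j + a j ≤ h + psum n j) ∧ 2 * ∑ j, a j = h + total n

lemma wa_Bal (a : Fin m → ℕ) (ha : ∀ t : Fin m, a t ≤ n t) (hok : okA n 0 a) :
    Bal (wa n a) (total n) := by
  have hzero : ((range (total n)).filter (fun i => wa n a i = false)).card = Psum a m := by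
    rw [total_eq]
    exact wa_closers_below n a ha m (le_refl m)
  have htot : wsum (wa n a) (total n) = 0 := by
    rw [wsum_eq_sub, hzero]
    have h2 := hok.2
    have h3 : (∑ j, a j) = Psum a m := total_eq (n := a)
    omega
  constructor
  · intro r hr
    rcases Nat.eq_or_lt_of_le hr with rfl | hlt
    · omega
    · rw [total_eq] at hlt
      obtain ⟨j, hj, h1, h2⟩ := boxOf hlt
      rw [wsum_eq_sub, wa_closers_mid n a ha hj h1 (by omega)]
      have hcond := hok.1 ⟨j, hj⟩
      rw [psum_eq, psum_eq] at hcond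
      simp only [np_coe] at *
      have hc2 : 2 * Psum a j + np a j ≤ 0 + Psum n j := by
        have : np a j = a ⟨j, hj⟩ := np_coe ⟨j, hj⟩
        omega
      rw [Psum_succ] at h2
      omega
  · exact htot

/-- the filtered closers of `wa` within box `j` -/
lemma wa_box_filter (a : Fin m → ℕ) (ha : ∀ t : Fin m, a t ≤ n t) {j : ℕ} (hj : j < m) :
    (Ico (Psum n j) (Psum n (j + 1))).filter (fun i => wa n a i = false)
      = Ico (Psum n j) (Psum n j + np a j) := by
  ext i
  rw [Finset.mem_filter, Finset.mem_Ico, Finset.mem_Ico]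
  constructor
  · rintro ⟨⟨hi1, hi2⟩, hi3⟩
    exact ⟨hi1, (wa_false_in_box n a ha hj hi1 hi2).1 hi3⟩
  · rintro ⟨hi1, hi2⟩
    have hle : np a j ≤ np n j := by
      rw [np, np, dif_pos hj, dif_pos hj]
      exact ha _
    have hi2' : i < Psum n (j + 1) := by rw [Psum_succ]; omega
    exact ⟨⟨hi1, hi2'⟩, (wa_false_in_box n a ha hj hi1 hi2').2 hi2⟩

/-- word of the canonical matching equals the word -/
lemma wp_Mw {w : ℕ → Bool} {N : ℕ} (hB : Bal w N) {i : ℕ} (hi : i < N) :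
    wp (Mw w N) i = w i := by
  have hpart := Mw_isPartition hB
  have hcard : ∀ b ∈ Mw w N, b.card = 2 := fun b hb => Mw_card hB hb
  by_cases hw : w i = true
  · obtain ⟨h1, h2, _, _, _⟩ := first_return_exists hB hi hw
    have hb := Mw_mem_of hi hw
    have hblk := blk_eq hpart hi hb (by simp)
    have hspec := ptr_spec hpart hcard hi
    have hptr : ptr (Mw w N) i ∈ ({i, fret w i} : Finset ℕ) := by
      rw [← hblk, hspec.2]; simp
    simp only [Finset.mem_insert, Finset.mem_singleton] at hptr
    rcases hptr with h | h
    · exact absurd h hspec.1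
    · rw [hw]
      rw [wp_true_iff.2 (by omega)]
  · have hw' : w i = false := by simpa using hw
    obtain ⟨p, hpi, hwp, hf⟩ := closer_has_opener hB hi hw'
    have hb : ({p, i} : Finset ℕ) ∈ Mw w N := by
      rw [← hf]; exact Mw_mem_of (by omega) hwp
    have hblk := blk_eq hpart hi hb (by simp)
    have hspec := ptr_spec hpart hcard hi
    have hptr : ptr (Mw w N) i ∈ ({p, i} : Finset ℕ) := by
      rw [← hblk, hspec.2]; simp
    simp only [Finset.mem_insert, Finset.mem_singleton] at hptr
    rcases hptr with h | h
    · rw [hw', wp_false_iff.2 (by omega)]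
    · exact absurd h hspec.1

variable {n}

/-- decoding gives a matching -/
lemma decode_mem (a : Fin m → ℕ) (ha : ∀ t : Fin m, a t ≤ n t) (hok : okA n 0 a) :
    Mw (wa n a) (total n) ∈ matchings n ∧ crossNum (total n) (Mw (wa n a) (total n)) = 0 := by
  have hB := wa_Bal n a ha hok
  set N := total n with hN
  refine ⟨Finset.mem_filter.2 ⟨?_, Mw_isPartition hB, fun b hb => Mw_card hB hb, ?_⟩,
    Mw_crossNum hB⟩
  · rw [Finset.mem_powerset]
    intro b hb
    exact Finset.mem_powerset.2 (Mw_subset hB hb)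
  · -- inhomogeneous
    intro b hb i hib k hkb hik hsame
    obtain ⟨p, hp, hwp, rfl⟩ := Mw_mem hb
    obtain ⟨h1, h2, _, _, h5⟩ := first_return_exists hB hp hwp
    obtain ⟨j0, ⟨hbox1, hbox2⟩⟩ := hsame
    -- reduce to showing p and fret p are not in a common box
    have key : ∀ j0 : Fin m, inBox n j0 p → inBox n j0 (fret (wa n a) p) → False := by
      intro j1 hBp hBq
      rw [inBox_iff] at hBp hBq
      have hcl : wa n a (fret (wa n a) p) = false := h5
      rw [wa_false_iff] at hcl
      obtain ⟨j', hj', hq1, hq2⟩ := hcl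
      have hle : np a j' ≤ np n j' := by
        rw [np, np, dif_pos hj', dif_pos hj']
        exact ha _
      have hbox' : Psum n j' ≤ fret (wa n a) p ∧ fret (wa n a) p < Psum n (j' + 1) := by
        rw [Psum_succ]; omega
      have hj1 : j' = j1.1 := box_unique hj' j1.2 hbox'.1 hbox'.2 hBq.1 hBq.2
      subst hj1
      -- p is an opener hence not among the first np a j' of the box
      have hop : ¬ (wa n a p = false) := by rw [hwp]; simp
      rw [wa_false_iff] at hop
      push_neg at hop
      have := hop _ hj' hBp.1
      omega
    simp only [Finset.mem_insert, Finset.mem_singleton] at hib hkb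
    rcases hib with rfl | rfl <;> rcases hkb with rfl | rfl
    · exact hik rfl
    · exact key j0 hbox1 hbox2
    · exact key j0 hbox2 hbox1
    · exact hik rfl

/-- encoding: closer counts per box -/
noncomputable def encd (n : Fin m → ℕ) (P : Finset (Finset ℕ)) : Fin m → ℕ :=
  fun j => ((Ico (Psum n j.1) (Psum n (j.1 + 1))).filter (fun i => wp P i = false)).card

lemma decode_encode (a : Fin m → ℕ) (ha : ∀ t : Fin m, a t ≤ n t) (hok : okA n 0 a) :
    encd n (Mw (wa n a) (total n)) = a := by
  have hB := wa_Bal n a ha hok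
  funext j
  rw [encd]
  have hcong : (Ico (Psum n j.1) (Psum n (j.1 + 1))).filter
      (fun i => wp (Mw (wa n a) (total n)) i = false)
      = (Ico (Psum n j.1) (Psum n (j.1 + 1))).filter (fun i => wa n a i = false) := by
    apply Finset.filter_congr
    intro i hi
    rw [Finset.mem_Ico] at hi
    have hiN : i < total n := by
      rw [total_eq]
      exact lt_of_lt_of_le hi.2 (Psum_mono j.2)
    rw [wp_Mw hB hiN]
  rw [hcong, wa_box_filter n a ha j.2, Nat.card_Ico, np_coe]
  omega

section Encode

variable {P : Finset (Finset ℕ)}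

/-- within a box, closers of a noncrossing inhomogeneous matching come first -/
lemma shape_wp (hpart : IsPartitionOf (total n) P) (hcard : ∀ b ∈ P, b.card = 2)
    (hcr : crossNum (total n) P = 0) (hinh : InhomBlocks n P)
    {j i : ℕ} (hj : j < m) (h1 : Psum n j ≤ i) (h2 : i + 1 < Psum n (j + 1))
    (hw : wp P i = true) : wp P (i + 1) = true := by
  set N := total n with hNdef
  have hiN : i + 1 < N := by
    rw [hNdef, total_eq]
    exact lt_of_lt_of_le h2 (Psum_mono hj)
  have hi : i < N := by omega
  have hop : i < ptr P i := wp_true_iff.1 hw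
  by_contra hcl'
  have hcl : ptr P (i + 1) ≤ i + 1 := by
    rcases Nat.lt_or_ge (i + 1) (ptr P (i + 1)) with h | h
    · exact absurd (wp_true_iff.2 h) hcl'
    · exact h
  have hne2 := ptr_ne hpart hcard hiN
  have hcllt : ptr P (i + 1) < i + 1 := by omega
  have hinv1 := ptr_invol hpart hcard hi
  have hinv2 := ptr_invol hpart hcard hiN
  by_cases hadj : ptr P i = i + 1
  · -- block {i, i+1} inside box j : contradicts inhomogeneity
    have hb : ({i, ptr P i} : Finset ℕ) ∈ P := ptr_block hpart hcard hi
    apply hinh _ hb i (by simp) (ptr P i) (by simp) (by omega)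
    refine ⟨⟨j, hj⟩, ?_, ?_⟩ <;> rw [inBox_iff] <;> simp only
    · exact ⟨h1, by omega⟩
    · rw [hadj]; exact ⟨by omega, by omega⟩
  · have hgt : i + 1 < ptr P i := by omega
    have hne3 : ptr P (i + 1) ≠ i := by
      intro h
      exact hadj ((congrArg (ptr P) h.symm).trans hinv2)
    have hlt2 : ptr P (i + 1) < i := by omega
    -- crossing (ptr (i+1), i+1) and (i, ptr i)
    have hptN : ptr P (i + 1) < N := by omega
    have hw1 : ptr P (i + 1) < ptr P (ptr P (i + 1)) := by rw [hinv2]; omega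
    exact no_cross hpart hcard hcr hptN hi hw1 hop hlt2 (by omega) (by omega)

lemma closers_box_wp (hpart : IsPartitionOf (total n) P) (hcard : ∀ b ∈ P, b.card = 2)
    (hcr : crossNum (total n) P = 0) (hinh : InhomBlocks n P) {j : ℕ} (hj : j < m) :
    (Ico (Psum n j) (Psum n (j + 1))).filter (fun i => wp P i = false)
      = Ico (Psum n j) (Psum n j + np (encd n P) j) := by
  have hsh : ∀ i, Psum n j ≤ i → i + 1 < Psum n (j + 1) →
      (fun i => wp P i = false) (i + 1) → (fun i => wp P i = false) i := by
    intro i hi1 hi2 hcl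
    by_contra h
    simp only [Bool.not_eq_false] at h
    rw [shape_wp hpart hcard hcr hinh hj hi1 hi2 h] at hcl
    cases hcl
  have := prefix_lemma (fun i => wp P i = false) (Psum n j) (Psum n (j + 1)) hsh
  rw [this]
  congr 1
  rw [np, dif_pos hj, encd]

lemma closers_below_wp (hpart : IsPartitionOf (total n) P) (hcard : ∀ b ∈ P, b.card = 2)
    (hcr : crossNum (total n) P = 0) (hinh : InhomBlocks n P) :
    ∀ j, j ≤ m → ((range (Psum n j)).filter (fun i => wp P i = false)).card
      = Psum (encd n P) j := by
  intro j
  induction j with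
  | zero => intro _; simp [Psum]
  | succ j ih =>
    intro hj
    have hj' : j < m := by omega
    rw [card_filter_split _ (Psum_mono (n := n) (show j ≤ j + 1 by omega)), ih (by omega),
      closers_box_wp hpart hcard hcr hinh hj', Nat.card_Ico, Psum_succ]
    omega

lemma encd_le (j : Fin m) : encd n P j ≤ n j := by
  have h1 : encd n P j ≤ (Ico (Psum n j.1) (Psum n (j.1 + 1))).card :=
    Finset.card_filter_le _ _
  rw [Nat.card_Ico, Psum_succ, np_coe] at h1
  omega

lemma encd_ok (hpart : IsPartitionOf (total n) P) (hcard : ∀ b ∈ P, b.card = 2)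
    (hcr : crossNum (total n) P = 0) (hinh : InhomBlocks n P) :
    okA n 0 (encd n P) := by
  set N := total n with hNdef
  constructor
  · intro j
    set u := Psum n j.1 with hu
    set e := encd n P j with he
    have heq : np (encd n P) j.1 = e := by rw [np_coe]
    have hele : e ≤ n j := encd_le j
    have hr1 : u + e ≤ Psum n (j.1 + 1) := by
      rw [Psum_succ, np_coe]
      omega
    have hrN : u + e ≤ N := by
      rw [hNdef, total_eq]
      exact le_trans hr1 (Psum_mono j.2)
    -- closers below u + e
    have hcount : ((range (u + e)).filter (fun i => wp P i = false)).card
        = Psum (encd n P) j.1 + e := by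
      rw [card_filter_split _ (show u ≤ u + e by omega),
        closers_below_wp hpart hcard hcr hinh j.1 (le_of_lt j.2)]
      have hbox := closers_box_wp hpart hcard hcr hinh j.2
      rw [heq] at hbox
      have hsub : (Ico u (u + e)).filter (fun i => wp P i = false) = Ico u (u + e) := by
        ext i
        rw [Finset.mem_filter, Finset.mem_Ico]
        constructor
        · rintro ⟨h1, _⟩; exact h1
        · intro hi
          have : i ∈ (Ico u (Psum n (j.1 + 1))).filter (fun i => wp P i = false) := by
            rw [hbox, Finset.mem_Ico]
            exact hi
          rw [Finset.mem_filter, Finset.mem_Ico] at this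
          exact ⟨⟨hi.1, by omega⟩, this.2⟩
      rw [hsub, Nat.card_Ico]
      omega
    have hnn := wp_nonneg hpart hcard hrN
    rw [wsum_eq_sub, hcount] at hnn
    rw [psum_eq, psum_eq]
    omega
  · have hbal := wp_balance hpart hcard
    rw [wsum_eq_sub] at hbal
    have hcount := closers_below_wp hpart hcard hcr hinh m (le_refl m)
    rw [← total_eq] at hcount
    rw [hcount] at hbal
    have h3 : (∑ j, encd n P j) = Psum (encd n P) m := total_eq
    omega

lemma encode_decode (hpart : IsPartitionOf (total n) P) (hcard : ∀ b ∈ P, b.card = 2)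
    (hcr : crossNum (total n) P = 0) (hinh : InhomBlocks n P) :
    Mw (wa n (encd n P)) (total n) = P := by
  set N := total n with hNdef
  have hB : Bal (wp P) N := wp_Bal hpart hcard
  have hword : ∀ i, i < N → wp P i = wa n (encd n P) i := by
    intro i hi
    have hiN : i < Psum n m := by rw [← total_eq]; exact hi
    obtain ⟨j, hj, h1, h2⟩ := boxOf hiN
    have hwa := wa_false_in_box n (encd n P) (fun t => encd_le t) hj h1 h2 (i := i)
    have hbox := closers_box_wp hpart hcard hcr hinh hj
    have hwp : wp P i = false ↔ i < Psum n j + np (encd n P) j := by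
      constructor
      · intro h
        have : i ∈ (Ico (Psum n j) (Psum n (j + 1))).filter (fun t => wp P t = false) := by
          rw [Finset.mem_filter, Finset.mem_Ico]
          exact ⟨⟨h1, h2⟩, h⟩
        rw [hbox, Finset.mem_Ico] at this
        omega
      · intro h
        have : i ∈ Ico (Psum n j) (Psum n j + np (encd n P) j) := by
          rw [Finset.mem_Ico]; exact ⟨h1, h⟩
        rw [← hbox, Finset.mem_filter] at this
        exact this.2
    rcases Bool.eq_false_or_eq_true (wp P i) with h | h
    · rw [h]
      rcases Bool.eq_false_or_eq_true (wa n (encd n P) i) with h' | h'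
      · exact h'.symm
      · exfalso
        have h5 := hwa.1 h'
        have h6 := hwp.2 h5
        rw [h] at h6
        cases h6
    · rw [h]
      exact ((hwa.2 (hwp.1 h)).symm)
  calc Mw (wa n (encd n P)) N = Mw (wp P) N :=
        (Mw_congr (fun t ht => hword t ht) hB).symm
    _ = P := (P_eq_Mw hpart hcard hcr).symm

end Encode

end Decode

/-! ### Counting -/

lemma card_matchings_eq (n : Fin m → ℕ) :
    ((matchings n).filter fun P => crossNum (total n) P = 0).card
      = ((Fintype.piFinset (fun j => range (n j + 1))).filter (okA n 0)).card := by
  apply Finset.card_nbij' (encd n) (fun a => Mw (wa n a) (total n))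
  · intro P hP
    rw [Finset.mem_coe, Finset.mem_filter] at hP
    obtain ⟨hP1, hcr⟩ := hP
    rw [matchings, Finset.mem_filter] at hP1
    obtain ⟨_, hpart, hcard, hinh⟩ := hP1
    rw [Finset.mem_coe, Finset.mem_filter]
    constructor
    · rw [Fintype.mem_piFinset]
      intro j
      rw [Finset.mem_range]
      have := encd_le (P := P) (n := n) j
      omega
    · exact encd_ok hpart hcard hcr hinh
  · intro a ha
    rw [Finset.mem_coe, Finset.mem_filter, Fintype.mem_piFinset] at ha
    obtain ⟨ha1, hok⟩ := ha
    have ha' : ∀ t : Fin m, a t ≤ n t := by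
      intro t
      have := ha1 t
      rw [Finset.mem_range] at this
      omega
    obtain ⟨h1, h2⟩ := decode_mem a ha' hok
    rw [Finset.mem_coe, Finset.mem_filter]
    exact ⟨h1, h2⟩
  · intro P hP
    rw [Finset.mem_coe, Finset.mem_filter] at hP
    obtain ⟨hP1, hcr⟩ := hP
    rw [matchings, Finset.mem_filter] at hP1
    obtain ⟨_, hpart, hcard, hinh⟩ := hP1
    exact encode_decode hpart hcard hcr hinh
  · intro a ha
    rw [Finset.mem_coe, Finset.mem_filter, Fintype.mem_piFinset] at ha
    obtain ⟨ha1, hok⟩ := ha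
    have ha' : ∀ t : Fin m, a t ≤ n t := by
      intro t
      have := ha1 t
      rw [Finset.mem_range] at this
      omega
    exact decode_encode a ha' hok

def pathCount : ℕ → List ℕ → ℕ
  | h, [] => if h = 0 then 1 else 0
  | h, c :: l => ∑ k ∈ range (min c h + 1), pathCount (c + h - 2 * k) l

lemma pathCount_nil (h : ℕ) : pathCount h [] = if h = 0 then 1 else 0 := rfl
lemma pathCount_cons (h c : ℕ) (l : List ℕ) :
    pathCount h (c :: l) = ∑ k ∈ range (min c h + 1), pathCount (c + h - 2 * k) l := rfl

lemma psum_zero {m : ℕ} (v : Fin (m + 1) → ℕ) : psum v 0 = 0 := by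
  simp [psum]

lemma psum_succ_fin {m : ℕ} (v : Fin (m + 1) → ℕ) (j : Fin m) :
    psum v j.succ = v 0 + psum (fun i => v i.succ) j := by
  rw [psum, psum, Fin.sum_univ_succ]
  congr 1
  · simp

lemma card_okA : ∀ (m : ℕ) (n : Fin m → ℕ) (h : ℕ),
    ((Fintype.piFinset (fun j => range (n j + 1))).filter (okA n h)).card
      = pathCount h (List.ofFn n) := by
  intro m
  induction m with
  | zero =>
    intro n h
    rw [List.ofFn_zero]
    rcases Nat.eq_zero_or_pos h with rfl | hh
    · rw [Finset.filter_true_of_mem, Fintype.card_piFinset]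
      · rw [pathCount_nil]
        simp
      · intro a _
        constructor
        · intro j; exact absurd j.2 (by omega)
        · simp [total]
    · rw [Finset.filter_false_of_mem]
      · rw [Finset.card_empty, pathCount_nil, if_neg (by omega)]
      · intro a _ hok
        have := hok.2
        simp [total] at this
        omega
  | succ m ih =>
    intro n h
    rw [List.ofFn_succ]
    show _ = ∑ k ∈ range (min (n 0) h + 1), pathCount (n 0 + h - 2 * k) (List.ofFn fun i => n i.succ)
    rw [Finset.card_eq_sum_card_fiberwise
      (f := fun a : Fin (m+1) → ℕ => a 0) (t := range (min (n 0) h + 1)) ?hmem]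
    case hmem =>
      intro a ha
      rw [Finset.mem_coe, Finset.mem_filter, Fintype.mem_piFinset] at ha
      obtain ⟨ha1, hok⟩ := ha
      have h1 := ha1 0
      rw [Finset.mem_range] at h1
      have h2 := hok.1 0
      rw [psum_zero, psum_zero] at h2
      show a 0 ∈ range (min (n 0) h + 1)
      rw [Finset.mem_range]
      omega
    apply Finset.sum_congr rfl
    intro k hk
    rw [Finset.mem_range] at hk
    rw [← ih (fun i => n i.succ) (n 0 + h - 2 * k)]
    apply Finset.card_nbij' (fun a => (fun i => a i.succ)) (fun b => Fin.cons k b)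
    · -- restriction maps fibers into the smaller set
      intro a ha
      rw [Finset.mem_coe, Finset.mem_filter, Finset.mem_filter, Fintype.mem_piFinset] at ha
      obtain ⟨⟨ha1, hok⟩, ha0⟩ := ha
      have ha0' : a 0 = k := ha0
      rw [Finset.mem_coe, Finset.mem_filter, Fintype.mem_piFinset]
      have hkn : k ≤ n 0 := by
        have := ha1 0; rw [Finset.mem_range] at this; omega
      have hkh : k ≤ h := by
        have h2 := hok.1 0
        rw [psum_zero, psum_zero] at h2
        omega
      refine ⟨fun j => ?_, fun j => ?_, ?_⟩
      · have := ha1 j.succ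
        rw [Finset.mem_range] at this ⊢
        exact this
      · have h2 := hok.1 j.succ
        rw [psum_succ_fin, psum_succ_fin, ha0'] at h2
        beta_reduce
        omega
      · have h2 := hok.2
        rw [total, Fin.sum_univ_succ (f := n), Fin.sum_univ_succ (f := a), ha0'] at h2
        rw [total]
        have he : (∑ j : Fin m, (fun i => a i.succ) j) = ∑ i : Fin m, a i.succ := rfl
        rw [he]
        omega
    · -- cons maps back into the fiber
      intro b hb
      rw [Finset.mem_coe, Finset.mem_filter, Fintype.mem_piFinset] at hb
      obtain ⟨hb1, hok⟩ := hb
      rw [Finset.mem_coe, Finset.mem_filter, Finset.mem_filter, Fintype.mem_piFinset]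
      beta_reduce
      have hbn : ∀ j : Fin m, b j ≤ n j.succ := by
        intro j
        have := hb1 j
        rw [Finset.mem_range] at this
        omega
      refine ⟨⟨fun j => ?_, fun j => ?_, ?_⟩, ?_⟩
      · rcases Fin.eq_zero_or_eq_succ j with rfl | ⟨j', rfl⟩
        · rw [Fin.cons_zero, Finset.mem_range]; omega
        · rw [Fin.cons_succ, Finset.mem_range]
          have := hb1 j'
          rw [Finset.mem_range] at this
          exact this
      · rcases Fin.eq_zero_or_eq_succ j with rfl | ⟨j', rfl⟩
        · rw [psum_zero, psum_zero, Fin.cons_zero]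
          omega
        · have h2 := hok.1 j'
          have hc1 : (fun i => (Fin.cons (α := fun _ => ℕ) k b) i.succ) = b :=
            funext fun i => Fin.cons_succ (α := fun _ => ℕ) k b i
          rw [psum_succ_fin, psum_succ_fin, hc1, Fin.cons_zero, Fin.cons_succ]
          omega
      · have h2 := hok.2
        rw [total] at h2 ⊢
        rw [Fin.sum_univ_succ (f := Fin.cons (α := fun _ => ℕ) k b),
          Fin.sum_univ_succ (f := n), Fin.cons_zero,
          Finset.sum_congr rfl (fun (i : Fin m) _ => Fin.cons_succ (α := fun _ => ℕ) k b i)]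
        have he2 : (univ.sum b) = ∑ j : Fin m, b j := rfl
        rw [he2]
        omega
      · simp
    · intro a ha
      rw [Finset.mem_coe, Finset.mem_filter] at ha
      have ha0 : a 0 = k := ha.2
      rw [← ha0]
      exact Fin.cons_self_tail a
    · intro b _
      funext i
      simp


lemma chebU_zero (x : ℝ) : chebU 0 x = 1 := rfl
lemma chebU_one (x : ℝ) : chebU 1 x = 2 * x := rfl
lemma chebU_add_two (n : ℕ) (x : ℝ) :
    chebU (n + 2) x = 2 * x * chebU (n + 1) x - chebU n x := rfl

lemma chebU_continuous (n : ℕ) : Continuous (chebU n) := by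
  induction n using Nat.twoStepInduction with
  | zero => simpa [chebU] using continuous_const
  | one =>
    have : (chebU 1) = fun x : ℝ => 2 * x := rfl
    rw [this]; continuity
  | more n ih1 ih2 =>
    have : (chebU (n + 2)) = fun x : ℝ => 2 * x * chebU (n + 1) x - chebU n x := rfl
    rw [this]
    exact ((continuous_const.mul continuous_id).mul ih2).sub ih1

lemma two_mul_chebU_succ (t : ℕ) (x : ℝ) :
    2 * x * chebU (t + 1) x = chebU (t + 2) x + chebU t x := by
  rw [chebU_add_two]; ring

/-- Linearization: U_n U_h = Σ_{k ≤ min n h} U_{n+h-2k}. -/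
lemma chebU_mul (n : ℕ) : ∀ (h : ℕ) (x : ℝ),
    chebU n x * chebU h x = ∑ k ∈ range (min n h + 1), chebU (n + h - 2 * k) x := by
  induction n using Nat.twoStepInduction with
  | zero => intro h x; simp [chebU_zero]
  | one =>
    intro h x
    rcases Nat.eq_zero_or_pos h with rfl | hp
    · simp [chebU_zero, chebU_one]
    · have hmin : min 1 h = 1 := by omega
      obtain ⟨t, rfl⟩ : ∃ t, h = t + 1 := ⟨h - 1, by omega⟩
      rw [hmin, chebU_one, two_mul_chebU_succ]
      rw [Finset.sum_range_succ, Finset.sum_range_one]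
      congr 1
      · congr 1; omega
      · congr 1; omega
  | more n ih1 ih2 =>
    intro h x
    rw [chebU_add_two, sub_mul, mul_assoc, ih2 h x, ih1 h x, Finset.mul_sum]
    rcases le_or_gt h n with hc | hc
    · -- h ≤ n
      have hm1 : min (n + 1) h = h := by omega
      have hm2 : min n h = h := by omega
      have hm3 : min (n + 2) h = h := by omega
      rw [hm1, hm2, hm3]
      have hterm : ∀ k ∈ range (h + 1),
          2 * x * chebU (n + 1 + h - 2 * k) x
            = chebU (n + 2 + h - 2 * k) x + chebU (n + h - 2 * k) x := by
        intro k hk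
        rw [Finset.mem_range] at hk
        obtain ⟨t, ht⟩ : ∃ t, n + 1 + h - 2 * k = t + 1 := ⟨n + h - 2 * k, by omega⟩
        rw [ht, two_mul_chebU_succ]
        congr 2 <;> omega
      rw [Finset.sum_congr rfl hterm, Finset.sum_add_distrib]
      ring
    · rcases Nat.lt_or_ge h (n + 2) with hc2 | hc2
      · -- h = n + 1
        have hh : h = n + 1 := by omega
        subst hh
        have hm1 : min (n + 1) (n + 1) = n + 1 := by omega
        have hm2 : min n (n + 1) = n := by omega
        have hm3 : min (n + 2) (n + 1) = n + 1 := by omega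
        rw [hm1, hm2, hm3]
        rw [Finset.sum_range_succ (fun k => 2 * x * chebU (n + 1 + (n + 1) - 2 * k) x)]
        have hlast : n + 1 + (n + 1) - 2 * (n + 1) = 0 := by omega
        have hterm : ∀ k ∈ range (n + 1),
            2 * x * chebU (n + 1 + (n + 1) - 2 * k) x
              = chebU (n + 2 + (n + 1) - 2 * k) x + chebU (n + (n + 1) - 2 * k) x := by
          intro k hk
          rw [Finset.mem_range] at hk
          obtain ⟨t, ht⟩ : ∃ t, n + 1 + (n + 1) - 2 * k = t + 1 := ⟨n + (n + 1) - 2 * k, by omega⟩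
          rw [ht, two_mul_chebU_succ]
          congr 2 <;> omega
        rw [Finset.sum_congr rfl hterm, Finset.sum_add_distrib, hlast]
        have h0 : 2 * x * chebU 0 x = chebU 1 x := by
          rw [chebU_zero, chebU_one]; ring
        rw [h0]
        rw [Finset.sum_range_succ (fun k => chebU (n + 2 + (n + 1) - 2 * k) x) (n + 1)]
        have h2 : n + 2 + (n + 1) - 2 * (n + 1) = 1 := by omega
        rw [h2, Finset.sum_range_succ (fun k => chebU (n + 2 + (n + 1) - 2 * k) x) n]
        ring
      · -- h ≥ n + 2
        have hm1 : min (n + 1) h = n + 1 := by omega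
        have hm2 : min n h = n := by omega
        have hm3 : min (n + 2) h = n + 2 := by omega
        rw [hm1, hm2, hm3]
        have hterm : ∀ k ∈ range (n + 2),
            2 * x * chebU (n + 1 + h - 2 * k) x
              = chebU (n + 2 + h - 2 * k) x + chebU (n + h - 2 * k) x := by
          intro k hk
          rw [Finset.mem_range] at hk
          obtain ⟨t, ht⟩ : ∃ t, n + 1 + h - 2 * k = t + 1 := ⟨n + h - 2 * k, by omega⟩
          rw [ht, two_mul_chebU_succ]
          congr 2 <;> omega
        rw [Finset.sum_congr rfl hterm, Finset.sum_add_distrib]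
        rw [Finset.sum_range_succ (fun k => chebU (n + h - 2 * k) x)]
        rw [Finset.sum_range_succ (fun k => chebU (n + 2 + h - 2 * k) x) (n + 2)]
        have he : n + h - 2 * (n + 1) = n + 2 + h - 2 * (n + 2) := by omega
        rw [he]
        ring

namespace Paper2
open Paper Real intervalIntegral

lemma chebU_cos (n : ℕ) : ∀ θ : ℝ,
    Real.sin θ * chebU n (Real.cos θ) = Real.sin ((n + 1 : ℕ) * θ) := by
  induction n using Nat.twoStepInduction with
  | zero => intro θ; simp [chebU_zero]
  | one =>
    intro θ
    rw [chebU_one]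
    push_cast
    rw [Real.sin_two_mul]
    ring
  | more n ih1 ih2 =>
    intro θ
    rw [chebU_add_two]
    have e1 : Real.sin θ * (2 * Real.cos θ * chebU (n + 1) (Real.cos θ) - chebU n (Real.cos θ))
        = 2 * Real.cos θ * (Real.sin θ * chebU (n + 1) (Real.cos θ))
          - Real.sin θ * chebU n (Real.cos θ) := by ring
    rw [e1, ih2, ih1]
    have e2 : ((n + 2 + 1 : ℕ) : ℝ) * θ = ((n + 1 + 1 : ℕ) : ℝ) * θ + θ := by push_cast; ring
    have e3 : ((n + 1 : ℕ) : ℝ) * θ = ((n + 1 + 1 : ℕ) : ℝ) * θ - θ := by push_cast; ring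
    rw [e2, e3, Real.sin_add, Real.sin_sub]
    ring

lemma subst_cos (f : ℝ → ℝ) (hf : Continuous f) :
    ∫ x in (-1:ℝ)..1, f x = ∫ θ in (0:ℝ)..Real.pi, Real.sin θ * f (Real.cos θ) := by
  have h := intervalIntegral.integral_comp_smul_deriv (a := 0) (b := Real.pi)
    (f := Real.cos) (f' := fun θ => -Real.sin θ) (g := f)
    (fun x _ => Real.hasDerivAt_cos x) (Real.continuous_sin.neg.continuousOn) hf
  rw [Real.cos_zero, Real.cos_pi] at h
  simp only [Function.comp, smul_eq_mul, neg_mul] at h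
  rw [intervalIntegral.integral_neg] at h
  have h3 : (∫ x in (1:ℝ)..(-1), f x) = - ∫ x in (-1:ℝ)..1, f x :=
    intervalIntegral.integral_symm _ _
  rw [h3] at h
  linarith

lemma integral_cos_nat (c : ℕ) :
    ∫ θ in (0:ℝ)..Real.pi, Real.cos ((c:ℝ) * θ) = if c = 0 then Real.pi else 0 := by
  rcases Nat.eq_zero_or_pos c with rfl | hc
  · simp
  · have hc' : (c:ℝ) ≠ 0 := by positivity
    rw [intervalIntegral.integral_comp_mul_left Real.cos hc']
    rw [integral_cos]
    simp [Real.sin_nat_mul_pi, hc.ne']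

lemma integral_sin_mul_sin (j : ℕ) :
    ∫ θ in (0:ℝ)..Real.pi, Real.sin ((j + 1 : ℕ) * θ) * Real.sin θ
      = if j = 0 then Real.pi / 2 else 0 := by
  have key : ∀ θ : ℝ, Real.sin ((j + 1 : ℕ) * θ) * Real.sin θ
      = (Real.cos ((j:ℝ) * θ) - Real.cos (((j + 2 : ℕ):ℝ) * θ)) / 2 := by
    intro θ
    have e1 : (j:ℝ) * θ = ((j + 1 : ℕ):ℝ) * θ - θ := by push_cast; ring
    have e2 : ((j + 2 : ℕ):ℝ) * θ = ((j + 1 : ℕ):ℝ) * θ + θ := by push_cast; ring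
    rw [e1, e2, Real.cos_sub, Real.cos_add]
    ring
  rw [intervalIntegral.integral_congr (g := fun θ =>
    (Real.cos ((j:ℝ) * θ) - Real.cos (((j + 2 : ℕ):ℝ) * θ)) / 2) (fun θ _ => key θ)]
  have hint1 : IntervalIntegrable (fun θ => Real.cos ((j:ℝ) * θ)) volume 0 Real.pi :=
    (Real.continuous_cos.comp (continuous_const.mul continuous_id)).intervalIntegrable _ _
  have hint2 : IntervalIntegrable (fun θ => Real.cos (((j + 2 : ℕ):ℝ) * θ)) volume 0 Real.pi :=
    (Real.continuous_cos.comp (continuous_const.mul continuous_id)).intervalIntegrable _ _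
  have e3 : (fun θ => (Real.cos ((j:ℝ) * θ) - Real.cos (((j + 2 : ℕ):ℝ) * θ)) / 2)
      = fun θ => (2:ℝ)⁻¹ * (Real.cos ((j:ℝ) * θ) - Real.cos (((j + 2 : ℕ):ℝ) * θ)) := by
    funext θ; ring
  rw [e3, intervalIntegral.integral_const_mul, intervalIntegral.integral_sub hint1 hint2,
    integral_cos_nat, integral_cos_nat]
  rcases Nat.eq_zero_or_pos j with rfl | hj
  · norm_num; ring
  · simp [hj.ne']

lemma integral_chebU_sqrt (j : ℕ) :
    ∫ x in (-1:ℝ)..1, chebU j x * Real.sqrt (1 - x ^ 2)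
      = if j = 0 then Real.pi / 2 else 0 := by
  have hf : Continuous (fun x => chebU j x * Real.sqrt (1 - x ^ 2)) := by
    apply (chebU_continuous j).mul
    exact Real.continuous_sqrt.comp (by continuity)
  rw [subst_cos _ hf]
  have heq : Set.EqOn (fun θ => Real.sin θ * (chebU j (Real.cos θ) * Real.sqrt (1 - Real.cos θ ^ 2)))
      (fun θ => Real.sin ((j + 1 : ℕ) * θ) * Real.sin θ) (Set.uIcc 0 Real.pi) := by
    intro θ hθ
    rw [Set.uIcc_of_le Real.pi_pos.le] at hθ
    have hs : Real.sqrt (1 - Real.cos θ ^ 2) = Real.sin θ := by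
      rw [← Real.sin_sq]
      exact Real.sqrt_sq (Real.sin_nonneg_of_mem_Icc hθ)
    simp only [hs]
    rw [← chebU_cos j θ]
    ring
  rw [intervalIntegral.integral_congr heq]
  exact integral_sin_mul_sin j

end Paper2

namespace Paper3
open Paper Paper2 Finset

noncomputable def prodU (l : List ℕ) (x : ℝ) : ℝ := (l.map (fun c => chebU c x)).prod

lemma prodU_nil (x : ℝ) : prodU [] x = 1 := rfl
lemma prodU_cons (n : ℕ) (l : List ℕ) (x : ℝ) :
    prodU (n :: l) x = chebU n x * prodU l x := by simp [prodU]

lemma prodU_continuous (l : List ℕ) : Continuous (prodU l) := by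
  induction l with
  | nil => exact continuous_const
  | cons n l ih =>
    have : prodU (n :: l) = fun x => chebU n x * prodU l x := by
      funext x; exact prodU_cons n l x
    rw [this]; exact (chebU_continuous n).mul ih

lemma integral_aux (l : List ℕ) : ∀ h : ℕ,
    ∫ x in (-1:ℝ)..1, chebU h x * prodU l x * Real.sqrt (1 - x ^ 2)
      = Real.pi / 2 * pathCount h l := by
  induction l with
  | nil =>
    intro h
    have e : (fun x => chebU h x * prodU [] x * Real.sqrt (1 - x ^ 2))
        = fun x => chebU h x * Real.sqrt (1 - x ^ 2) := by
      funext x; rw [prodU_nil]; ring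
    rw [e, integral_chebU_sqrt]
    rcases Nat.eq_zero_or_pos h with rfl | hh
    · simp [pathCount]
    · simp [pathCount, hh.ne']
  | cons n l ih =>
    intro h
    have e : (fun x => chebU h x * prodU (n :: l) x * Real.sqrt (1 - x ^ 2))
        = fun x => ∑ k ∈ range (min n h + 1),
            chebU (n + h - 2 * k) x * prodU l x * Real.sqrt (1 - x ^ 2) := by
      funext x
      rw [prodU_cons]
      have e1 : chebU h x * (chebU n x * prodU l x) * Real.sqrt (1 - x ^ 2)
          = (chebU n x * chebU h x) * (prodU l x * Real.sqrt (1 - x ^ 2)) := by ring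
      rw [e1, chebU_mul n h x, Finset.sum_mul]
      exact Finset.sum_congr rfl (fun k _ => by ring)
    rw [e, intervalIntegral.integral_finset_sum]
    · have e2 : ∀ k ∈ range (min n h + 1),
          (∫ x in (-1:ℝ)..1, chebU (n + h - 2 * k) x * prodU l x * Real.sqrt (1 - x ^ 2))
            = Real.pi / 2 * pathCount (n + h - 2 * k) l := fun k _ => ih _
      rw [Finset.sum_congr rfl e2, ← Finset.mul_sum]
      have : pathCount h (n :: l) = ∑ k ∈ range (min n h + 1), pathCount (n + h - 2 * k) l := rfl
      rw [this]
      push_cast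
      ring
    · intro k _
      apply Continuous.intervalIntegrable
      exact ((chebU_continuous _).mul (prodU_continuous l)).mul
        (Real.continuous_sqrt.comp (by continuity))

end Paper3

open Paper3

/-- the number of crossing-free inhomogeneous perfect matchings is
given by the Chebyshev integral. -/
theorem crossing_free_matchings_chebyshev {m : ℕ} (n : Fin m → ℕ) :
    (((matchings n).filter fun P => crossNum (total n) P = 0).card : ℝ)
      = 2 / Real.pi *
          ∫ x in (-1 : ℝ)..1, (∏ j : Fin m, chebU (n j) x) * Real.sqrt (1 - x ^ 2) := by
  have hcard : ((matchings n).filter fun P => crossNum (total n) P = 0).card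
      = pathCount 0 (List.ofFn n) := by
    rw [card_matchings_eq, card_okA]
  have hint : (∫ x in (-1:ℝ)..1, (∏ j : Fin m, chebU (n j) x) * Real.sqrt (1 - x ^ 2))
      = Real.pi / 2 * pathCount 0 (List.ofFn n) := by
    rw [← integral_aux (List.ofFn n) 0]
    have he : (fun x => (∏ j : Fin m, chebU (n j) x) * Real.sqrt (1 - x ^ 2))
        = fun x => chebU 0 x * prodU (List.ofFn n) x * Real.sqrt (1 - x ^ 2) := by
      funext x
      rw [chebU_zero, prodU, List.map_ofFn, List.prod_ofFn]
      have : (∏ j : Fin m, chebU (n j) x) = ∏ j : Fin m, ((fun c => chebU c x) ∘ n) j :=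
        Finset.prod_congr rfl (fun j _ => rfl)
      rw [this]
      ring
    rw [he]
  rw [hcard, hint, ← mul_assoc]
  have hpi : 2 / Real.pi * (Real.pi / 2) = 1 := by
    field_simp
  rw [hpi, one_mul]


end Paper
end

section
/- Let α > −1 and let n_0, n_1, …, n_m be nonnegative integers with total N = n_0 + n_1 + ⋯ + n_m. Partition [N] into boxes S_0, S_1, …, S_m of sizes n_0, n_1, …, n_m (consecutive intervals), and let S*(n_0,n) be the set of permutations π of [N] such that for every j with 1 ≤ j ≤ m and every i ∈ S_j one has π(i) ∉ S_j (no restriction on S_0). Then ((−1)^{n_1+⋯+n_m}/Γ(α+1)) ∫_0^∞ x^{n_0+α} e^{-x} ∏_{j=1}^m n_j!·L_{n_j}^{(α)}(x) dx = Σ_{π ∈ S*(n_0,n)} (α+1)^{cyc(π)}, where cyc(π) is the number of cycles of π (fixed points counting as cycles). -/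
open Finset MeasureTheory
open scoped Classical

namespace Paper

/-- Generalized binomial coefficient `binom(n+α, n-k) = (α+k+1)⋯(α+n)/(n-k)!`. -/
noncomputable def genBinom (α : ℝ) (n k : ℕ) : ℝ :=
  (∏ t ∈ Finset.Ico k n, (α + t + 1)) / (Nat.factorial (n - k) : ℝ)

/-- The Laguerre polynomial `L_n^{(α)}(x) = Σ_{k=0}^n (-1)^k binom(n+α,n-k) x^k/k!`. -/
noncomputable def laguerre (α : ℝ) (n : ℕ) (x : ℝ) : ℝ :=
  ∑ k ∈ Finset.range (n + 1), (-1 : ℝ) ^ k * genBinom α n k * x ^ k / (Nat.factorial k : ℝ)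

/-- Number of cycles of a permutation, fixed points counting as cycles. -/
def cyc {α : Type*} [DecidableEq α] [Fintype α] (σ : Equiv.Perm α) : ℕ :=
  σ.cycleType.card + (Fintype.card α - σ.support.card)




open Equiv Equiv.Perm

variable {α : Type*} [DecidableEq α] [Fintype α]

lemma support_card_le (σ : Perm α) : σ.support.card ≤ Fintype.card α :=
  Finset.card_le_univ _

lemma cyc_conj (τ σ : Perm α) : cyc (τ * σ * τ⁻¹) = cyc σ := by
  unfold cyc
  rw [cycleType_conj, card_support_conj]

lemma cyc_permCongr {β : Type*} [DecidableEq β] [Fintype β] (e : α ≃ β) (σ : Perm α) :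
    cyc (e.permCongr σ) = cyc σ := by
  have hp : ∀ x : β, (fun _ : β => True) x := fun _ => trivial
  set f : α ≃ Subtype (fun _ : β => True) := e.trans (Equiv.subtypeUnivEquiv hp).symm with hf
  have key : e.permCongr σ = σ.extendDomain f := by
    ext b
    have : (fun _ : β => True) b := trivial
    rw [extendDomain_apply_subtype _ f this]
    simp [f, Equiv.permCongr_apply, Equiv.subtypeUnivEquiv]
  rw [key]
  unfold cyc
  rw [cycleType_extendDomain, card_support_extend_domain, Fintype.card_congr e]

lemma cyc_swap_mul (f : Perm α) (x : α) (hx : f x ≠ x) :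
    cyc (Equiv.swap x (f x) * f) = cyc f + 1 := by
  classical
  set c := f.cycleOf x with hc_def
  have hc : IsCycle c := isCycle_cycleOf f hx
  have hmem : c ∈ f.cycleFactorsFinset := cycleOf_mem_cycleFactorsFinset_iff.2 (mem_support.2 hx)
  have hdisj : (f * c⁻¹).Disjoint c := disjoint_mul_inv_of_mem_cycleFactorsFinset hmem
  set g := f * c⁻¹ with hg_def
  have hfg : g * c = f := by rw [hg_def]; group
  have hcx : c x = f x := cycleOf_apply_self f x
  have hccx : c (f x) = f (f x) := cycleOf_apply_apply_self f x
  have hcx' : c x ≠ x := by rw [hcx]; exact hx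
  have hxc : x ∈ c.support := mem_support.2 hcx'
  -- swap commutes with g
  have hfx_supp : f x ∈ c.support := by
    rw [mem_support, hccx]
    intro h
    exact hx (f.injective h)
  have hswap_supp : (Equiv.swap x (f x)).support ⊆ c.support := by
    rw [support_swap (Ne.symm hx)]
    intro z hz
    simp only [Finset.mem_insert, Finset.mem_singleton] at hz
    rcases hz with rfl | rfl
    · exact hxc
    · exact hfx_supp
  have hdisj_swap : (g).Disjoint (Equiv.swap x (f x)) := by
    rw [disjoint_iff_disjoint_support]
    exact Finset.disjoint_of_subset_right hswap_supp
      (disjoint_iff_disjoint_support.1 hdisj)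
  have hcomm : Commute (Equiv.swap x (f x)) g := (hdisj_swap.commute).symm
  have hmain : Equiv.swap x (f x) * f = g * (Equiv.swap x (f x) * c) := by
    rw [← mul_assoc, ← hcomm.eq, mul_assoc, hfg]
  have hsupp_f : f.support = g.support ∪ c.support := by
    rw [← hfg, (hdisj).support_mul]
  have hdisj_supp : _root_.Disjoint g.support c.support := disjoint_iff_disjoint_support.1 hdisj
  have hcard_f : f.support.card = g.support.card + c.support.card := by
    rw [hsupp_f, Finset.card_union_of_disjoint hdisj_supp]
  have hctf : f.cycleType = g.cycleType + c.cycleType := by rw [← hfg, hdisj.cycleType_mul]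
  by_cases hA : c (c x) = x
  · -- c is a 2-cycle equal to the swap
    have hc_eq : c = Equiv.swap x (c x) := hc.eq_swap_of_apply_apply_eq_self hcx' hA
    have : Equiv.swap x (f x) * c = 1 := by
      rw [hc_eq, ← hcx]
      simp
    rw [hmain, this, mul_one]
    have hctc : c.cycleType = {2} := by
      rw [hc.cycleType, hc_eq, card_support_swap hcx'.symm]
    have hcard_c : c.support.card = 2 := by
      rw [hc_eq, card_support_swap hcx'.symm]
    unfold cyc
    rw [hctf, hctc]
    have h1 : g.support.card ≤ Fintype.card α := support_card_le g
    have h3 : f.support.card ≤ Fintype.card α := support_card_le f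
    simp only [Multiset.card_add, Multiset.card_singleton]
    omega
  · -- general case : shorten the cycle
    have hc' : IsCycle (Equiv.swap x (c x) * c) := hc.swap_mul hcx' hA
    have hsupp_c' : (Equiv.swap x (c x) * c).support = c.support \ {x} :=
      support_swap_mul_eq c x hA
    have hcard_c' : (Equiv.swap x (c x) * c).support.card = c.support.card - 1 := by
      rw [hsupp_c', Finset.card_sdiff_of_subset (Finset.singleton_subset_iff.2 hxc)]
      simp
    have hdisj' : g.Disjoint (Equiv.swap x (c x) * c) := by
      rw [disjoint_iff_disjoint_support]
      refine Finset.disjoint_of_subset_right ?_ hdisj_supp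
      rw [hsupp_c']
      exact Finset.sdiff_subset
    have hct : (g * (Equiv.swap x (c x) * c)).cycleType = g.cycleType + {(Equiv.swap x (c x) * c).support.card} := by
      rw [hdisj'.cycleType_mul, hc'.cycleType]
    rw [hmain, ← hcx]
    unfold cyc
    rw [hct]
    have hcard_supp_mul : (g * (Equiv.swap x (c x) * c)).support.card
        = g.support.card + (c.support.card - 1) := by
      rw [hdisj'.support_mul, Finset.card_union_of_disjoint, hcard_c']
      rw [hsupp_c']
      exact Finset.disjoint_of_subset_right Finset.sdiff_subset hdisj_supp
    rw [hcard_supp_mul, hcard_c']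
    have h1 : f.support.card ≤ Fintype.card α := support_card_le f
    have h1g : g.support.card ≤ Fintype.card α := support_card_le g
    have h2 : 2 ≤ c.support.card := hc.two_le_card_support
    simp only [Multiset.card_add, Multiset.card_singleton, hctf, hc.cycleType,
      Multiset.coe_card, List.length_cons, List.length_nil]
    omega

section OptionPart
open Equiv Equiv.Perm Finset


variable {α : Type*} [DecidableEq α] [Fintype α]

lemma optionCongr_eq_extendDomain (σ : Perm α) :
    σ.optionCongr = σ.extendDomain (Equiv.optionIsSomeEquiv α).symm := by
  refine Equiv.ext fun o => ?_
  rcases o with _ | a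
  · rw [Equiv.Perm.extendDomain_apply_not_subtype]
    · simp
    · simp
  · rw [Equiv.Perm.extendDomain_apply_subtype σ (Equiv.optionIsSomeEquiv α).symm
      (show (some a).isSome = true from rfl)]
    simp [Equiv.optionIsSomeEquiv]

lemma cyc_optionCongr (σ : Perm α) : cyc σ.optionCongr = cyc σ + 1 := by
  rw [optionCongr_eq_extendDomain]
  unfold cyc
  rw [cycleType_extendDomain, card_support_extend_domain, Fintype.card_option]
  have := support_card_le σ
  omega

lemma perm_option_eq_optionCongr (σ : Perm (Option α)) (h : σ none = none) :
    σ = (removeNone σ).optionCongr := by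
  refine Equiv.ext fun o => ?_
  rcases o with _ | a
  · simp [h]
  · have hne : σ (some a) ≠ none := fun hc => Option.some_ne_none a (σ.injective (hc.trans h.symm))
    obtain ⟨z, hz⟩ := Option.ne_none_iff_exists'.1 hne
    simp [Equiv.removeNone_some σ ⟨z, hz⟩, h]

lemma cyc_none_fixed (σ : Perm (Option α)) (h : σ none = none) :
    cyc σ = cyc (removeNone σ) + 1 := by
  conv_lhs => rw [perm_option_eq_optionCongr σ h]
  exact cyc_optionCongr _

lemma cyc_none_moved (σ : Perm (Option α)) (h : σ none ≠ none) :
    cyc σ = cyc (removeNone σ) := by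
  set s := Equiv.swap none (σ none) * σ with hs_def
  have h1 : cyc s = cyc σ + 1 := cyc_swap_mul σ none h
  have h2 : s none = none := by
    simp [hs_def, Equiv.swap_apply_right]
  have h3 : removeNone s = removeNone σ := by
    ext y
    apply Option.some_injective
    rcases hy : σ (some y) with _ | z
    · obtain ⟨b, hb⟩ := Option.ne_none_iff_exists'.1 h
      have hsy : s (some y) = σ none := by
        simp [hs_def, Perm.mul_apply, hy, Equiv.swap_apply_left]
      rw [Equiv.removeNone_some s ⟨b, by rw [hsy, hb]⟩, hsy,
        Equiv.removeNone_none σ hy]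
    · have hzne : some z ≠ σ none := by
        intro hcontra
        exact Option.some_ne_none y (σ.injective (hy.trans hcontra))
      have hsy : s (some y) = some z := by
        simp only [hs_def, Perm.mul_apply, hy]
        exact Equiv.swap_apply_of_ne_of_ne (Option.some_ne_none z) hzne
      rw [Equiv.removeNone_some s ⟨z, hsy⟩, hsy, Equiv.removeNone_some σ ⟨z, hy⟩, hy]
  have h4 : cyc s = cyc (removeNone σ) + 1 := by
    rw [← h3]; exact cyc_none_fixed s h2
  omega

end OptionPart

section DelPart
open Equiv Equiv.Perm Finset

variable {M : ℕ}

lemma finSuccEquiv'_symm_none (a : Fin (M+1)) : (finSuccEquiv' a).symm none = a := by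
  rw [← finSuccEquiv'_at a]
  exact (finSuccEquiv' a).symm_apply_apply a

lemma finSuccEquiv'_symm_some (a : Fin (M+1)) (j : Fin M) :
    (finSuccEquiv' a).symm (some j) = a.succAbove j := by
  rw [← finSuccEquiv'_succAbove a j]
  exact (finSuccEquiv' a).symm_apply_apply _

/-- Deletion of the point `a` from a permutation of `Fin (M+1)`. -/
def delEquiv (a : Fin (M+1)) : Perm (Fin (M+1)) ≃ Fin (M+1) × Perm (Fin M) :=
  ((finSuccEquiv' a).permCongr).trans (Equiv.Perm.decomposeOption.trans
    (Equiv.prodCongr (finSuccEquiv' a).symm (Equiv.refl _)))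

def delPerm (a : Fin (M+1)) (π : Perm (Fin (M+1))) : Perm (Fin M) := (delEquiv a π).2

lemma delEquiv_fst (a : Fin (M+1)) (π : Perm (Fin (M+1))) : (delEquiv a π).1 = π a := by
  show (finSuccEquiv' a).symm (((finSuccEquiv' a).permCongr π) none) = π a
  rw [Equiv.permCongr_apply, finSuccEquiv'_symm_none]
  exact (finSuccEquiv' a).symm_apply_apply _

lemma delEquiv_eq (a : Fin (M+1)) (π : Perm (Fin (M+1))) :
    delEquiv a π = (π a, delPerm a π) := by
  rw [← delEquiv_fst a π]; rfl

lemma cyc_delPerm (a : Fin (M+1)) (π : Perm (Fin (M+1))) :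
    cyc π = cyc (delPerm a π) + (if π a = a then 1 else 0) := by
  have hc : cyc π = cyc ((finSuccEquiv' a).permCongr π) := (cyc_permCongr _ _).symm
  have hnone : ((finSuccEquiv' a).permCongr π) none = finSuccEquiv' a (π a) := by
    rw [Equiv.permCongr_apply, finSuccEquiv'_symm_none]
  by_cases h : π a = a
  · rw [if_pos h, hc, cyc_none_fixed _ (by rw [hnone, h, finSuccEquiv'_at])]
    rfl
  · rw [if_neg h, hc, cyc_none_moved _ ?_]
    · rfl
    · rw [hnone]
      intro hcontra
      apply h
      have := (finSuccEquiv' a).injective (hcontra.trans (finSuccEquiv'_at a).symm)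
      exact this
  
lemma delPerm_succAbove (a : Fin (M+1)) (π : Perm (Fin (M+1))) (j : Fin M) :
    a.succAbove (delPerm a π j) =
      if π (a.succAbove j) = a then π a else π (a.succAbove j) := by
  have hsome : ((finSuccEquiv' a).permCongr π) (some j) = finSuccEquiv' a (π (a.succAbove j)) := by
    rw [Equiv.permCongr_apply, finSuccEquiv'_symm_some]
  have hdp : delPerm a π = removeNone ((finSuccEquiv' a).permCongr π) := rfl
  by_cases h : π (a.succAbove j) = a
  · rw [if_pos h]
    have h1 : ((finSuccEquiv' a).permCongr π) (some j) = none := by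
      rw [hsome, h, finSuccEquiv'_at]
    have h2 := Equiv.removeNone_none _ h1
    have h3 : ((finSuccEquiv' a).permCongr π) none = finSuccEquiv' a (π a) := by
      rw [Equiv.permCongr_apply, finSuccEquiv'_symm_none]
    rw [h3] at h2
    rw [hdp, ← finSuccEquiv'_symm_some, h2, Equiv.symm_apply_apply]
  · rw [if_neg h]
    have hex : ∃ z, ((finSuccEquiv' a).permCongr π) (some j) = some z := by
      rw [hsome]
      rcases hcase : finSuccEquiv' a (π (a.succAbove j)) with _ | z
      · exact absurd ((finSuccEquiv' a).injective (hcase.trans (finSuccEquiv'_at a).symm)) h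
      · exact ⟨z, rfl⟩
    have h2 := Equiv.removeNone_some _ hex
    rw [hsome] at h2
    rw [hdp, ← finSuccEquiv'_symm_some, h2, Equiv.symm_apply_apply]

/-- Full sum of `x ^ cyc` over all permutations. -/
lemma sum_cyc_perm (x : ℝ) : ∀ N : ℕ,
    (∑ π : Perm (Fin N), x ^ cyc π) = ∏ t ∈ Finset.range N, (x + t) := by
  intro N
  induction N with
  | zero =>
    have huniv : ∀ π : Perm (Fin 0), π = 1 := fun π => Equiv.ext (fun i => i.elim0)
    have h1 : (∑ π : Perm (Fin 0), x ^ cyc π) = x ^ cyc (1 : Perm (Fin 0)) := by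
      apply Finset.sum_eq_single_of_mem 1 (Finset.mem_univ _)
      intro π _ hne
      exact absurd (huniv π) hne
    rw [h1]
    have hcyc1 : cyc (1 : Perm (Fin 0)) = 0 := by
      unfold cyc; simp
    simp [hcyc1]
  | succ M ih =>
    have key : ∀ π : Perm (Fin (M+1)), x ^ cyc π =
        (fun p : Fin (M+1) × Perm (Fin M) => x ^ cyc p.2 * (if p.1 = 0 then x else 1))
          (delEquiv 0 π) := by
      intro π
      simp only [delEquiv_eq]
      rw [cyc_delPerm 0 π]
      by_cases h : π 0 = 0
      · rw [if_pos h, if_pos h, pow_add, pow_one]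
      · rw [if_neg h, if_neg h, add_zero, mul_one]
    rw [Finset.sum_congr rfl (fun π _ => key π)]
    rw [Equiv.sum_comp (delEquiv (0 : Fin (M+1)))
      (fun p : Fin (M+1) × Perm (Fin M) => x ^ cyc p.2 * (if p.1 = 0 then x else 1))]
    rw [Fintype.sum_prod_type]
    have inner : ∀ b : Fin (M+1), (∑ σ : Perm (Fin M), x ^ cyc σ * (if b = 0 then x else 1))
        = (if b = 0 then x else 1) * ∏ t ∈ Finset.range M, (x + t) := by
      intro b
      rw [← Finset.sum_mul, ih, mul_comm]
    rw [Finset.sum_congr rfl (fun b _ => inner b)]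
    rw [← Finset.add_sum_erase _ _ (Finset.mem_univ (0 : Fin (M+1)))]
    rw [if_pos rfl]
    have herase : ∀ b ∈ Finset.univ.erase (0 : Fin (M+1)),
        (if b = 0 then x else 1) * ∏ t ∈ Finset.range M, (x + t)
          = ∏ t ∈ Finset.range M, (x + t) := by
      intro b hb
      rw [if_neg (Finset.ne_of_mem_erase hb), one_mul]
    rw [Finset.sum_congr rfl herase, Finset.sum_const]
    have hcard : (Finset.univ.erase (0 : Fin (M+1))).card = M := by
      rw [Finset.card_erase_of_mem (Finset.mem_univ _), Finset.card_univ, Fintype.card_fin]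
      rfl
    rw [hcard, Finset.prod_range_succ]
    push_cast
    ring

end DelPart
section ESPart
open Equiv Equiv.Perm Finset

/-- Weighted count of permutations avoiding `Bad`, with the top `p` rows
forbidden from hitting the top `q` columns. -/
noncomputable def ES (x : ℝ) (Bad : ℕ → ℕ → Prop) (N p q : ℕ) : ℝ :=
  ∑ π ∈ Finset.univ.filter (fun π : Perm (Fin N) =>
      (∀ i : Fin N, ¬ Bad (i : ℕ) ((π i : ℕ))) ∧
      ∀ i : Fin N, N - p ≤ (i : ℕ) → ((π i : ℕ) < N - q)),
    x ^ cyc π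

variable {M : ℕ}

lemma coe_succAbove (a : Fin (M+1)) (j : Fin M) :
    ((a.succAbove j) : ℕ) = if (j:ℕ) < (a:ℕ) then (j:ℕ) else (j:ℕ)+1 := by
  rw [Fin.succAbove]
  by_cases h : (j:ℕ) < (a:ℕ)
  · rw [if_pos h, if_pos (show Fin.castSucc j < a from by simpa [Fin.lt_def] using h)]
    simp
  · rw [if_neg h, if_neg (show ¬ Fin.castSucc j < a from by simpa [Fin.lt_def] using h)]
    simp

lemma contract_sum (x : ℝ) (Bad : ℕ → ℕ → Prop) (r q : ℕ) (hq : q ≤ r) (hr : r ≤ M)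
    (hBad : ∀ i j, Bad i j → i < M - r ∧ j < M - r)
    (a : Fin (M+1)) (ha : M - r ≤ (a:ℕ)) :
    ∑ π ∈ Finset.univ.filter (fun π : Perm (Fin (M+1)) =>
        ((∀ i : Fin (M+1), ¬ Bad (i:ℕ) ((π i:ℕ))) ∧
         (∀ i : Fin (M+1), M + 1 - (r+1) ≤ (i:ℕ) → ((π i:ℕ) < M + 1 - q))) ∧
        π a = ⟨M - q, by omega⟩), x ^ cyc π
    = (if (a:ℕ) = M - q then x else 1) * ES x Bad M r q := by
  classical
  set b : Fin (M+1) := ⟨M - q, by omega⟩ with hb_def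
  have hbv : (b:ℕ) = M - q := rfl
  rw [ES, Finset.mul_sum]
  refine Finset.sum_nbij' (fun π => delPerm a π) (fun σ => (delEquiv a).symm (b, σ))
    ?_ ?_ ?_ ?_ ?_
  · -- forward membership
    intro π hπmem
    rw [Finset.mem_filter] at hπmem
    obtain ⟨-, ⟨hπ1, hπ2⟩, hπa⟩ := hπmem
    set σ := delPerm a π with hσ_def
    have hEQ : ∀ j : Fin M, a.succAbove (σ j) =
        if π (a.succAbove j) = a then b else π (a.succAbove j) := by
      intro j
      have := delPerm_succAbove a π j
      rw [hπa] at this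
      exact this
    rw [Finset.mem_filter]
    refine ⟨Finset.mem_univ _, ?_, ?_⟩
    · -- Bad condition for σ
      intro j
      by_cases hjlow : (j:ℕ) < M - r
      · have hja : (j:ℕ) < (a:ℕ) := lt_of_lt_of_le hjlow ha
        have hιj : ((a.succAbove j):ℕ) = (j:ℕ) := by
          rw [coe_succAbove, if_pos hja]
        by_cases hπj : π (a.succAbove j) = a
        · have hEQj := hEQ j
          rw [if_pos hπj] at hEQj
          have hval := congrArg Fin.val hEQj
          rw [coe_succAbove] at hval
          intro hbad
          have h2 := (hBad _ _ hbad).2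
          by_cases hss : ((σ j):ℕ) < (a:ℕ)
          · rw [if_pos hss] at hval
            simp only [hb_def] at hval
            omega
          · rw [if_neg hss] at hval
            omega
        · have hEQj := hEQ j
          rw [if_neg hπj] at hEQj
          have hval := congrArg Fin.val hEQj
          rw [coe_succAbove] at hval
          have hC1 := hπ1 (a.succAbove j)
          rw [hιj] at hC1
          intro hbad
          by_cases hss : ((σ j):ℕ) < (a:ℕ)
          · rw [if_pos hss] at hval
            exact hC1 (by rw [← hval]; exact hbad)
          · rw [if_neg hss] at hval
            have h2 := (hBad _ _ hbad).2
            omega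
      · intro hbad
        exact absurd (hBad _ _ hbad).1 hjlow
    · -- row condition for σ
      intro j hjrow
      have hιjrow : M + 1 - (r+1) ≤ ((a.succAbove j):ℕ) := by
        rw [coe_succAbove]; split_ifs <;> omega
      have hC2 := hπ2 _ hιjrow
      by_cases hπj : π (a.succAbove j) = a
      · have hEQj := hEQ j
        rw [if_pos hπj] at hEQj
        have hval := congrArg Fin.val hEQj
        rw [coe_succAbove] at hval
        have hC2a : (a:ℕ) < M + 1 - q := by rw [← hπj]; exact hC2
        by_cases hss : ((σ j):ℕ) < (a:ℕ)
        · rw [if_pos hss] at hval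
          simp only [hb_def] at hval
          omega
        · rw [if_neg hss] at hval
          simp only [hb_def] at hval
          omega
      · have hEQj := hEQ j
        rw [if_neg hπj] at hEQj
        have hval := congrArg Fin.val hEQj
        rw [coe_succAbove] at hval
        have hne : ((π (a.succAbove j)):ℕ) ≠ M - q := by
          intro hcontra
          apply Fin.succAbove_ne a j
          apply π.injective
          rw [hπa]
          exact Fin.ext hcontra
        by_cases hss : ((σ j):ℕ) < (a:ℕ)
        · rw [if_pos hss] at hval
          omega
        · rw [if_neg hss] at hval
          omega
  · -- backward membership
    intro σ hσmem
    rw [Finset.mem_filter] at hσmem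
    obtain ⟨-, hσ1, hσ2⟩ := hσmem
    set π : Perm (Fin (M+1)) := (delEquiv a).symm (b, σ) with hπ_def
    have hπd : delEquiv a π = (b, σ) := Equiv.apply_symm_apply _ _
    have hπa : π a = b := by
      have := delEquiv_fst a π
      rw [hπd] at this
      exact this.symm
    have hσd : delPerm a π = σ := by
      rw [delPerm, hπd]
    have hEQ : ∀ j : Fin M, a.succAbove (σ j) =
        if π (a.succAbove j) = a then b else π (a.succAbove j) := by
      intro j
      have := delPerm_succAbove a π j
      rw [hσd, hπa] at this
      exact this
    rw [Finset.mem_filter]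
    refine ⟨Finset.mem_univ _, ⟨?_, ?_⟩, hπa⟩
    · -- Bad condition for π
      intro i
      by_cases hia : i = a
      · subst hia
        rw [hπa]
        intro hbad
        have := (hBad _ _ hbad).1
        omega
      · obtain ⟨j, rfl⟩ := Fin.exists_succAbove_eq hia
        by_cases hπj : π (a.succAbove j) = a
        · rw [hπj]
          intro hbad
          have := (hBad _ _ hbad).2
          omega
        · have hEQj := hEQ j
          rw [if_neg hπj] at hEQj
          have hv : ((π (a.succAbove j)):ℕ) =
              if ((σ j):ℕ) < (a:ℕ) then ((σ j):ℕ) else ((σ j):ℕ)+1 := by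
            rw [← hEQj, coe_succAbove]
          intro hbad
          rw [hv, coe_succAbove] at hbad
          by_cases hja : (j:ℕ) < (a:ℕ)
          · rw [if_pos hja] at hbad
            by_cases hsa : ((σ j):ℕ) < (a:ℕ)
            · rw [if_pos hsa] at hbad
              exact hσ1 j hbad
            · rw [if_neg hsa] at hbad
              have := (hBad _ _ hbad).2
              omega
          · rw [if_neg hja] at hbad
            have := (hBad _ _ hbad).1
            omega
    · -- row condition for π
      intro i hi
      by_cases hia : i = a
      · subst hia
        rw [hπa]
        simp only [hb_def]
        omega
      · obtain ⟨j, rfl⟩ := Fin.exists_succAbove_eq hia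
        have hjrow : M - r ≤ (j:ℕ) := by
          rw [coe_succAbove] at hi
          by_cases hja : (j:ℕ) < (a:ℕ)
          · rw [if_pos hja] at hi; omega
          · omega
        have hσ2j := hσ2 j hjrow
        by_cases hπj : π (a.succAbove j) = a
        · have hEQj := hEQ j
          rw [if_pos hπj] at hEQj
          have hval := congrArg Fin.val hEQj
          rw [coe_succAbove] at hval
          simp only [hb_def] at hval
          rw [hπj]
          by_cases hss : ((σ j):ℕ) < (a:ℕ)
          · rw [if_pos hss] at hval
            omega
          · rw [if_neg hss] at hval
            omega
        · have hEQj := hEQ j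
          rw [if_neg hπj] at hEQj
          have hv : ((π (a.succAbove j)):ℕ) =
              if ((σ j):ℕ) < (a:ℕ) then ((σ j):ℕ) else ((σ j):ℕ)+1 := by
            rw [← hEQj, coe_succAbove]
          rw [hv]
          split_ifs <;> omega
  · -- left inverse
    intro π hπmem
    rw [Finset.mem_filter] at hπmem
    have hπa : π a = b := hπmem.2.2
    have : delEquiv a π = (b, delPerm a π) := by
      rw [delEquiv_eq, hπa]
    rw [← this, Equiv.symm_apply_apply]
  · -- right inverse
    intro σ _
    show (delEquiv a ((delEquiv a).symm (b, σ))).2 = σ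
    rw [Equiv.apply_symm_apply]
  · -- weights
    intro π hπmem
    rw [Finset.mem_filter] at hπmem
    have hπa : π a = b := hπmem.2.2
    rw [cyc_delPerm a π]
    by_cases hab : (a:ℕ) = M - q
    · have : π a = a := by rw [hπa]; exact (Fin.ext hab).symm
      rw [if_pos this, if_pos hab, pow_add, pow_one]
      ring
    · have : π a ≠ a := by
        rw [hπa]
        intro hcontra
        exact hab (congrArg Fin.val hcontra).symm
      rw [if_neg this, if_neg hab, add_zero, one_mul]

end ESPart
section ESRec
open Equiv Equiv.Perm Finset
variable {M : ℕ}

theorem ES_rec (x : ℝ) (Bad : ℕ → ℕ → Prop) (r q : ℕ) (hq : q ≤ r) (hr : r ≤ M)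
    (hBad : ∀ i j, Bad i j → i < M - r ∧ j < M - r) :
    ES x Bad (M+1) (r+1) (q+1) = ES x Bad (M+1) (r+1) q - (x + r) * ES x Bad M r q := by
  classical
  set b : Fin (M+1) := ⟨M - q, by omega⟩ with hb_def
  have hbv : (b:ℕ) = M - q := rfl
  set A : Finset (Perm (Fin (M+1))) := Finset.univ.filter (fun π =>
      (∀ i : Fin (M+1), ¬ Bad (i : ℕ) ((π i : ℕ))) ∧
      ∀ i : Fin (M+1), M + 1 - (r+1) ≤ (i : ℕ) → ((π i : ℕ) < M + 1 - q)) with hA_def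
  set A1 : Finset (Perm (Fin (M+1))) := Finset.univ.filter (fun π =>
      (∀ i : Fin (M+1), ¬ Bad (i : ℕ) ((π i : ℕ))) ∧
      ∀ i : Fin (M+1), M + 1 - (r+1) ≤ (i : ℕ) → ((π i : ℕ) < M + 1 - (q+1))) with hA1_def
  have hES1 : ES x Bad (M+1) (r+1) q = ∑ π ∈ A, x ^ cyc π := rfl
  have hES2 : ES x Bad (M+1) (r+1) (q+1) = ∑ π ∈ A1, x ^ cyc π := rfl
  have hsub : A1 ⊆ A := by
    intro π h
    rw [hA1_def, Finset.mem_filter] at h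
    rw [hA_def, Finset.mem_filter]
    exact ⟨h.1, h.2.1, fun i hi => by have := h.2.2 i hi; omega⟩
  have hsplit : ∑ π ∈ A, x ^ cyc π = ∑ π ∈ A \ A1, x ^ cyc π + ∑ π ∈ A1, x ^ cyc π :=
    (Finset.sum_sdiff hsub).symm
  set R : Finset (Fin (M+1)) := Finset.univ.filter (fun a => M - r ≤ (a:ℕ)) with hR_def
  have hmaps : ∀ π ∈ A \ A1, π⁻¹ b ∈ R := by
    intro π h
    rw [Finset.mem_sdiff] at h
    obtain ⟨hA', hnA1⟩ := h
    rw [hA_def, Finset.mem_filter] at hA'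
    rw [hA1_def, Finset.mem_filter] at hnA1
    push_neg at hnA1
    obtain ⟨i, hi, hival⟩ := hnA1 (Finset.mem_univ _) hA'.2.1
    have h2 := hA'.2.2 i hi
    have hπib : π i = b := Fin.ext (by omega)
    have : π⁻¹ b = i := by rw [← hπib, Equiv.Perm.inv_def, Equiv.symm_apply_apply]
    rw [this, hR_def, Finset.mem_filter]
    exact ⟨Finset.mem_univ _, by omega⟩
  have hfiber : ∑ π ∈ A \ A1, x ^ cyc π
      = ∑ a ∈ R, ∑ π ∈ (A \ A1).filter (fun π => π⁻¹ b = a), x ^ cyc π :=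
    (Finset.sum_fiberwise_of_maps_to hmaps _).symm
  have hPa : ∀ a ∈ R, (A \ A1).filter (fun π => π⁻¹ b = a)
      = Finset.univ.filter (fun π : Perm (Fin (M+1)) =>
          ((∀ i : Fin (M+1), ¬ Bad (i:ℕ) ((π i:ℕ))) ∧
           (∀ i : Fin (M+1), M + 1 - (r+1) ≤ (i:ℕ) → ((π i:ℕ) < M + 1 - q))) ∧
          π a = ⟨M - q, by omega⟩) := by
    intro a haR
    rw [hR_def, Finset.mem_filter] at haR
    ext π
    rw [Finset.mem_filter, Finset.mem_sdiff, hA_def, Finset.mem_filter, hA1_def,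
      Finset.mem_filter, Finset.mem_filter]
    constructor
    · rintro ⟨⟨⟨-, hc1, hc2⟩, -⟩, hinv⟩
      have hπab : π a = b := by rw [← hinv, Equiv.Perm.inv_def, Equiv.apply_symm_apply]
      exact ⟨Finset.mem_univ _, ⟨hc1, hc2⟩, hπab⟩
    · rintro ⟨-, ⟨hc1, hc2⟩, hπab⟩
      have hπab' : π a = b := hπab
      refine ⟨⟨⟨Finset.mem_univ _, hc1, hc2⟩, ?_⟩, ?_⟩
      · intro hcon
        have := hcon.2.2 a (by omega)
        rw [hπab'] at this
        rw [hbv] at this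
        omega
      · rw [← hπab', Equiv.Perm.inv_def, Equiv.symm_apply_apply]
  have hTa : ∀ a ∈ R, ∑ π ∈ (A \ A1).filter (fun π => π⁻¹ b = a), x ^ cyc π
      = (if (a:ℕ) = M - q then x else 1) * ES x Bad M r q := by
    intro a haR
    rw [hPa a haR]
    have haR' : M - r ≤ (a:ℕ) := by
      rw [hR_def, Finset.mem_filter] at haR
      exact haR.2
    exact contract_sum x Bad r q hq hr hBad a haR'
  have hsumR : ∑ a ∈ R, (if (a:ℕ) = M - q then x else 1) * ES x Bad M r q
      = (x + r) * ES x Bad M r q := by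
    have hbR : b ∈ R := by
      rw [hR_def, Finset.mem_filter]
      exact ⟨Finset.mem_univ _, by rw [hbv]; omega⟩
    rw [← Finset.add_sum_erase _ _ hbR, hbv, if_pos rfl]
    have hrest : ∀ a ∈ R.erase b,
        (if (a:ℕ) = M - q then x else 1) * ES x Bad M r q = ES x Bad M r q := by
      intro a ha
      have hne : a ≠ b := Finset.ne_of_mem_erase ha
      rw [if_neg (fun hcontra => hne (Fin.ext (by rw [hcontra, hbv]))), one_mul]
    rw [Finset.sum_congr rfl hrest, Finset.sum_const]
    have hcardR : R.card = r + 1 := by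
      rw [hR_def, Finset.card_filter]
      rw [Fin.sum_univ_eq_sum_range (fun i => if M - r ≤ i then 1 else 0) (M+1)]
      have hsplit2 : Finset.range (M+1) = Finset.Ico 0 (M+1) := by
        rw [Finset.range_eq_Ico]
      rw [hsplit2, ← Finset.sum_Ico_consecutive _ (Nat.zero_le (M-r)) (by omega : M - r ≤ M+1)]
      have h1 : ∑ i ∈ Finset.Ico 0 (M-r), (if M - r ≤ i then 1 else 0) = 0 :=
        Finset.sum_eq_zero (fun i hi => if_neg (by rw [Finset.mem_Ico] at hi; omega))
      have h2 : ∑ i ∈ Finset.Ico (M-r) (M+1), (if M - r ≤ i then 1 else 0)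
          = (M + 1 - (M - r)) := by
        rw [Finset.sum_congr rfl (fun i hi => if_pos (by rw [Finset.mem_Ico] at hi; exact hi.1))]
        rw [Finset.sum_const, Nat.card_Ico, smul_eq_mul, mul_one]
      rw [h1, h2]
      omega
    have hcard : (R.erase b).card = r := by
      rw [Finset.card_erase_of_mem hbR, hcardR]
      omega
    rw [hcard, nsmul_eq_mul]
    ring
  rw [hES2, hES1, hsplit, hfiber, Finset.sum_congr rfl hTa, hsumR]
  ring

end ESRec
section Closed
open Equiv Equiv.Perm Finset

noncomputable def PS (x : ℝ) (Bad : ℕ → ℕ → Prop) (N : ℕ) : ℝ :=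
  ∑ π ∈ Finset.univ.filter (fun π : Perm (Fin N) =>
      ∀ i : Fin N, ¬ Bad (i:ℕ) ((π i:ℕ))), x ^ cyc π

lemma ES_zero (x : ℝ) (Bad : ℕ → ℕ → Prop) (N p : ℕ) :
    ES x Bad N p 0 = PS x Bad N := by
  rw [ES, PS]
  congr 1
  ext π
  rw [Finset.mem_filter, Finset.mem_filter]
  constructor
  · rintro ⟨h1, h2, -⟩; exact ⟨h1, h2⟩
  · rintro ⟨h1, h2⟩
    exact ⟨h1, h2, fun i _ => by have := (π i).isLt; omega⟩

lemma PS_of_not (x : ℝ) (Bad : ℕ → ℕ → Prop) (N : ℕ) (h : ∀ i j, ¬ Bad i j) :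
    PS x Bad N = ∏ t ∈ Finset.range N, (x + t) := by
  rw [PS, Finset.filter_true_of_mem (fun π _ => fun i => h _ _), ← sum_cyc_perm x N]

theorem ES_closed (x : ℝ) (Bad : ℕ → ℕ → Prop) :
    ∀ q r N : ℕ, q ≤ r → r ≤ N → (∀ i j, Bad i j → i < N - r ∧ j < N - r) →
    ES x Bad N r q = ∑ a ∈ Finset.range (q+1), (-1:ℝ)^a * (Nat.choose q a : ℝ) *
      (∏ t ∈ Finset.Ico (r-a) r, (x + t)) * PS x Bad (N - a) := by
  intro q
  induction q with
  | zero =>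
    intro r N hq hr hB
    rw [ES_zero, Finset.sum_range_one]
    simp
  | succ q ih =>
    intro r N hq hr hB
    obtain ⟨r', rfl⟩ : ∃ r', r = r'+1 := ⟨r-1, by omega⟩
    obtain ⟨M, rfl⟩ : ∃ M, N = M+1 := ⟨N-1, by omega⟩
    have hB' : ∀ i j, Bad i j → i < M - r' ∧ j < M - r' := by
      intro i j h
      have := hB i j h
      omega
    have hrec := ES_rec x Bad r' q (by omega) (by omega) hB'
    rw [hrec]
    rw [ih (r'+1) (M+1) (by omega) (by omega) hB]
    rw [ih r' M (by omega) (by omega) hB']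
    -- pure algebra
    set f : ℕ → ℝ := fun a => (-1:ℝ)^a * (Nat.choose (q+1) a : ℝ) *
      (∏ t ∈ Finset.Ico (r'+1-a) (r'+1), (x + t)) * PS x Bad (M+1 - a) with hf
    set g : ℕ → ℝ := fun a => (-1:ℝ)^a * (Nat.choose q a : ℝ) *
      (∏ t ∈ Finset.Ico (r'+1-a) (r'+1), (x + t)) * PS x Bad (M+1 - a) with hg
    set h : ℕ → ℝ := fun a => (-1:ℝ)^a * (Nat.choose q a : ℝ) *
      (∏ t ∈ Finset.Ico (r'-a) r', (x + t)) * PS x Bad (M - a) with hh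
    show (∑ a ∈ Finset.range (q+1), g a) - (x + r') * (∑ a ∈ Finset.range (q+1), h a)
      = ∑ a ∈ Finset.range (q+2), f a
    rw [Finset.sum_range_succ' f (q+1), Finset.sum_range_succ' g q, Finset.mul_sum]
    have hextend : ∑ a ∈ Finset.range q, g (a+1) = ∑ a ∈ Finset.range (q+1), g (a+1) := by
      rw [Finset.sum_range_succ]
      have : g (q+1) = 0 := by
        rw [hg]
        simp [Nat.choose_succ_self]
      rw [this, add_zero]
    rw [hextend]
    have hg0f0 : g 0 = f 0 := by rw [hg, hf]; norm_num
    have hterm : ∀ a ∈ Finset.range (q+1), g (a+1) - (x + r') * h a = f (a+1) := by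
      intro a ha
      rw [Finset.mem_range] at ha
      simp only [hg, hf, hh]
      have e1 : r' + 1 - (a+1) = r' - a := by omega
      have e2 : M + 1 - (a+1) = M - a := by omega
      rw [e1, e2]
      have e3 : ∏ t ∈ Finset.Ico (r'-a) (r'+1), (x + (t:ℝ))
          = (∏ t ∈ Finset.Ico (r'-a) r', (x + (t:ℝ))) * (x + r') := by
        rw [Finset.prod_Ico_succ_top (by omega : r' - a ≤ r')]
      rw [e3]
      have e4 : (Nat.choose (q+1) (a+1) : ℝ) = (Nat.choose q a : ℝ) + (Nat.choose q (a+1) : ℝ) := by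
        rw [Nat.choose_succ_succ]
        push_cast
        ring
      rw [e4]
      ring
    have hkey : ∑ a ∈ Finset.range (q+1), g (a+1) - ∑ a ∈ Finset.range (q+1), ((x + r') * h a)
        = ∑ a ∈ Finset.range (q+1), f (a+1) := by
      rw [← Finset.sum_sub_distrib]
      exact Finset.sum_congr rfl hterm
    linarith [hkey, hg0f0]

end Closed
section Reloc
open Equiv Equiv.Perm Finset

lemma PS_reloc (x : ℝ) {N : ℕ} (Bad Bad' : ℕ → ℕ → Prop) (Φ : Equiv.Perm (Fin N))
    (h : ∀ i j : Fin N, Bad' (i:ℕ) (j:ℕ) ↔ Bad ((Φ i):ℕ) ((Φ j):ℕ)) :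
    PS x Bad' N = PS x Bad N := by
  rw [PS, PS]
  refine Finset.sum_nbij' (fun π => Φ * π * Φ⁻¹) (fun π => Φ⁻¹ * π * Φ) ?_ ?_ ?_ ?_ ?_
  · intro π hπ
    rw [Finset.mem_filter] at hπ ⊢
    refine ⟨Finset.mem_univ _, ?_⟩
    intro i
    have hcond := hπ.2 (Φ⁻¹ i)
    intro hbad
    apply hcond
    rw [h]
    simp only [Perm.mul_apply] at hbad ⊢
    rwa [Equiv.Perm.inv_def, Equiv.apply_symm_apply]
  · intro π hπ
    rw [Finset.mem_filter] at hπ ⊢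
    refine ⟨Finset.mem_univ _, ?_⟩
    intro i
    have hcond := hπ.2 (Φ i)
    intro hbad
    apply hcond
    have := (h i ((Φ⁻¹ * π * Φ) i)).1 hbad
    simp only [Perm.mul_apply] at this
    rwa [Equiv.Perm.inv_def, Equiv.apply_symm_apply] at this
  · intro π _
    group
  · intro π _
    group
  · intro π _
    rw [show Φ * π * Φ⁻¹ = Φ * π * Φ⁻¹ from rfl]
    rw [cyc_conj]

/-- The permutation of `Fin N` moving the interval `[s, s+q)` to the top `[N-q, N)`,
shifting everything in between down by `q`. -/
def relocPerm (N s q : ℕ) (hsq : s + q ≤ N) : Equiv.Perm (Fin N) where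
  toFun i := if h1 : (i:ℕ) < s then i
    else if h2 : (i:ℕ) < s + q then ⟨(i:ℕ) + (N - (s+q)), by omega⟩
    else ⟨(i:ℕ) - q, by have := i.isLt; omega⟩
  invFun i := if h1 : (i:ℕ) < s then i
    else if h2 : (i:ℕ) < N - q then ⟨(i:ℕ) + q, by omega⟩
    else ⟨(i:ℕ) - (N - (s+q)), by have := i.isLt; omega⟩
  left_inv := by
    intro i
    dsimp only
    have hiN := i.isLt
    by_cases h1 : (i:ℕ) < s
    · rw [dif_pos h1, dif_pos h1]
    · rw [dif_neg h1]
      by_cases h2 : (i:ℕ) < s + q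
      · rw [dif_pos h2, dif_neg (show ¬((⟨(i:ℕ) + (N - (s+q)), by omega⟩ : Fin N):ℕ) < s by
          simp only []; omega)]
        rw [dif_neg (show ¬((⟨(i:ℕ) + (N - (s+q)), by omega⟩ : Fin N):ℕ) < N - q by
          simp only []; omega)]
        apply Fin.ext
        simp only []
        omega
      · rw [dif_neg h2, dif_neg (show ¬((⟨(i:ℕ) - q, by omega⟩ : Fin N):ℕ) < s by
          simp only []; omega)]
        rw [dif_pos (show ((⟨(i:ℕ) - q, by omega⟩ : Fin N):ℕ) < N - q by
          simp only []; omega)]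
        apply Fin.ext
        simp only []
        omega
  right_inv := by
    intro i
    dsimp only
    have hiN := i.isLt
    by_cases h1 : (i:ℕ) < s
    · rw [dif_pos h1, dif_pos h1]
    · rw [dif_neg h1]
      by_cases h2 : (i:ℕ) < N - q
      · rw [dif_pos h2, dif_neg (show ¬((⟨(i:ℕ) + q, by omega⟩ : Fin N):ℕ) < s by
          simp only []; omega)]
        rw [dif_neg (show ¬((⟨(i:ℕ) + q, by omega⟩ : Fin N):ℕ) < s + q by
          simp only []; omega)]
        apply Fin.ext
        simp only []
        omega
      · rw [dif_neg h2, dif_neg (show ¬((⟨(i:ℕ) - (N - (s+q)), by omega⟩ : Fin N):ℕ) < s by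
          simp only []; omega)]
        rw [dif_pos (show ((⟨(i:ℕ) - (N - (s+q)), by omega⟩ : Fin N):ℕ) < s + q by
          simp only []; omega)]
        apply Fin.ext
        simp only []
        omega

lemma relocPerm_val (N s q : ℕ) (hsq : s + q ≤ N) (i : Fin N) :
    ((relocPerm N s q hsq i):ℕ) = if (i:ℕ) < s then (i:ℕ)
      else if (i:ℕ) < s + q then (i:ℕ) + (N - (s+q)) else (i:ℕ) - q := by
  have hrfl : (relocPerm N s q hsq) i = (if _ : (i:ℕ) < s then i
    else if _ : (i:ℕ) < s + q then (⟨(i:ℕ) + (N - (s+q)), by omega⟩ : Fin N)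
    else (⟨(i:ℕ) - q, by have := i.isLt; omega⟩ : Fin N)) := rfl
  rw [hrfl]
  by_cases h1 : (i:ℕ) < s
  · rw [dif_pos h1, if_pos h1]
  · rw [dif_neg h1, if_neg h1]
    by_cases h2 : (i:ℕ) < s + q
    · rw [dif_pos h2, if_pos h2]
    · rw [dif_neg h2, if_neg h2]

end Reloc
section Boxes
open Equiv Equiv.Perm Finset

def BadOf (L : List (ℕ × ℕ)) : ℕ → ℕ → Prop := fun i j =>
  ∃ p ∈ L, (p.1 ≤ i ∧ i < p.1 + p.2) ∧ (p.1 ≤ j ∧ j < p.1 + p.2)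

lemma reloc_boxes (x : ℝ) (N s q : ℕ) (L : List (ℕ×ℕ)) (hsq : s + q ≤ N)
    (hL : ∀ p ∈ L, p.1 + p.2 ≤ N ∧ (p.2 = 0 ∨ p.1 + p.2 ≤ s ∨ s + q ≤ p.1)) :
    PS x (BadOf ((s,q)::L)) N
      = PS x (BadOf ((N-q,q) :: L.map (fun p => if s ≤ p.1 then (p.1 - q, p.2) else p))) N := by
  set f : ℕ×ℕ → ℕ×ℕ := fun p => if s ≤ p.1 then (p.1 - q, p.2) else p with hf
  have hval := relocPerm_val N s q hsq
  have helper1 : ∀ i : Fin N, (s ≤ (i:ℕ) ∧ (i:ℕ) < s + q)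
      ↔ (N - q ≤ ((relocPerm N s q hsq i):ℕ) ∧ ((relocPerm N s q hsq i):ℕ) < (N-q) + q) := by
    intro i
    have hiN := i.isLt
    rw [hval i]
    split_ifs <;> omega
  have helper2 : ∀ p ∈ L, ∀ i : Fin N, (p.1 ≤ (i:ℕ) ∧ (i:ℕ) < p.1 + p.2)
      ↔ ((f p).1 ≤ ((relocPerm N s q hsq i):ℕ) ∧
          ((relocPerm N s q hsq i):ℕ) < (f p).1 + (f p).2) := by
    intro p hp i
    have hiN := i.isLt
    obtain ⟨hfit, hpos⟩ := hL p hp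
    rw [hval i, hf]
    dsimp only
    rcases hpos with h0 | hbelow | habove
    · split_ifs <;> omega
    · split_ifs <;> omega
    · split_ifs <;> omega
  apply PS_reloc x _ _ (relocPerm N s q hsq)
  intro i j
  constructor
  · rintro ⟨p, hp, hIi, hIj⟩
    rcases List.mem_cons.1 hp with rfl | hpL
    · exact ⟨(N-q, q), List.mem_cons_self,
        (helper1 i).1 hIi, (helper1 j).1 hIj⟩
    · exact ⟨f p, List.mem_cons_of_mem _ (List.mem_map_of_mem hpL),
        (helper2 p hpL i).1 hIi, (helper2 p hpL j).1 hIj⟩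
  · rintro ⟨p', hp', hIi, hIj⟩
    rcases List.mem_cons.1 hp' with rfl | hpL
    · exact ⟨(s, q), List.mem_cons_self, (helper1 i).2 hIi, (helper1 j).2 hIj⟩
    · obtain ⟨p, hpL0, rfl⟩ := List.mem_map.1 hpL
      exact ⟨p, List.mem_cons_of_mem _ hpL0, (helper2 p hpL0 i).2 hIi,
        (helper2 p hpL0 j).2 hIj⟩

lemma PS_cons_top (x : ℝ) (N q : ℕ) (L : List (ℕ×ℕ)) (hqN : q ≤ N) :
    PS x (BadOf ((N-q,q)::L)) N = ES x (BadOf L) N q q := by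
  rw [PS, ES]
  congr 1
  ext π
  rw [Finset.mem_filter, Finset.mem_filter]
  constructor
  · rintro ⟨h0, hc⟩
    refine ⟨h0, ?_, ?_⟩
    · intro i hbad
      obtain ⟨p, hp, hI⟩ := hbad
      exact hc i ⟨p, List.mem_cons_of_mem _ hp, hI⟩
    · intro i hi
      by_contra hge
      push_neg at hge
      exact hc i ⟨(N-q,q), List.mem_cons_self,
        ⟨hi, by have := i.isLt; omega⟩, ⟨hge, by have := (π i).isLt; omega⟩⟩
  · rintro ⟨h0, hc1, hc2⟩
    refine ⟨h0, ?_⟩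
    rintro i ⟨p, hp, hIi, hIj⟩
    rcases List.mem_cons.1 hp with rfl | hpL
    · have := hc2 i hIi.1
      omega
    · exact hc1 i ⟨p, hpL, hIi, hIj⟩

noncomputable def RHSfun (x : ℝ) : ℕ → List ℕ → ℝ
  | N, [] => ∏ t ∈ Finset.range N, (x + (t:ℝ))
  | N, q :: L => ∑ k ∈ Finset.range (q+1), (-1:ℝ)^(q-k) * (Nat.choose q k : ℝ) *
      (∏ t ∈ Finset.Ico k q, (x + (t:ℝ))) * RHSfun x (N - (q - k)) L

lemma RHSfun_nil (x : ℝ) (N : ℕ) : RHSfun x N [] = ∏ t ∈ Finset.range N, (x + (t:ℝ)) := rfl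

lemma RHSfun_cons (x : ℝ) (N q : ℕ) (L : List ℕ) :
    RHSfun x N (q :: L) = ∑ k ∈ Finset.range (q+1), (-1:ℝ)^(q-k) * (Nat.choose q k : ℝ) *
      (∏ t ∈ Finset.Ico k q, (x + (t:ℝ))) * RHSfun x (N - (q - k)) L := rfl

theorem goalC (x : ℝ) : ∀ (n : ℕ) (L : List (ℕ×ℕ)) (N : ℕ), L.length = n →
    (∀ p ∈ L, p.1 + p.2 ≤ N) →
    L.Pairwise (fun p p' => p.2 = 0 ∨ p'.2 = 0 ∨ p.1 + p.2 ≤ p'.1 ∨ p'.1 + p'.2 ≤ p.1) →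
    PS x (BadOf L) N = RHSfun x N (L.map Prod.snd) := by
  intro n
  induction n with
  | zero =>
    intro L N hlen _ _
    rw [List.length_eq_zero_iff] at hlen
    subst hlen
    rw [PS_of_not x _ N (by rintro i j ⟨p, hp, -⟩; simp at hp)]
    rfl
  | succ n ih =>
    intro L N hlen hfit hdisj
    obtain ⟨⟨s,q⟩, L', rfl⟩ : ∃ p L', L = p :: L' := by
      cases L with
      | nil => simp at hlen
      | cons a l => exact ⟨a, l, rfl⟩
    have hsq : s + q ≤ N := hfit _ (List.mem_cons_self)
    have hdisj_head : ∀ p ∈ L', q = 0 ∨ p.2 = 0 ∨ s + q ≤ p.1 ∨ p.1 + p.2 ≤ s := by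
      intro p hp
      have := (List.pairwise_cons.1 hdisj).1 p hp
      tauto
    have hL'fit : ∀ p ∈ L', p.1 + p.2 ≤ N := fun p hp => hfit p (List.mem_cons_of_mem _ hp)
    set f : ℕ×ℕ → ℕ×ℕ := fun p => if s ≤ p.1 then (p.1 - q, p.2) else p with hf
    by_cases hq0 : q = 0
    · -- empty head box: drop it
      subst hq0
      have hdrop : PS x (BadOf ((s,0)::L')) N = PS x (BadOf L') N := by
        rw [PS, PS]
        congr 1
        ext π
        rw [Finset.mem_filter, Finset.mem_filter]
        constructor
        · rintro ⟨h0, hc⟩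
          refine ⟨h0, fun i hbad => ?_⟩
          obtain ⟨p, hp, hI⟩ := hbad
          exact hc i ⟨p, List.mem_cons_of_mem _ hp, hI⟩
        · rintro ⟨h0, hc⟩
          refine ⟨h0, fun i hbad => ?_⟩
          obtain ⟨p, hp, hI⟩ := hbad
          rcases List.mem_cons.1 hp with rfl | hpL
          · omega
          · exact hc i ⟨p, hpL, hI⟩
      rw [hdrop, ih L' N (by simpa using hlen) hL'fit (List.pairwise_cons.1 hdisj).2]
      rw [show ((s,0)::L').map Prod.snd = 0 :: L'.map Prod.snd from rfl, RHSfun_cons]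
      rw [Finset.sum_range_one]
      norm_num
    · -- main case
      rw [reloc_boxes x N s q L' hsq (fun p hp => ⟨hL'fit p hp, by
        have := hdisj_head p hp; tauto⟩)]
      set L'' := L'.map f with hL''
      have hL''fit : ∀ p ∈ L'', p.1 + p.2 ≤ N - q := by
        intro p hp
        rw [hL'', List.mem_map] at hp
        obtain ⟨p0, hp0, rfl⟩ := hp
        have h1 := hL'fit p0 hp0
        have h2 := hdisj_head p0 hp0
        rw [hf]
        dsimp only
        split_ifs <;> omega
      rw [PS_cons_top x N q L'' (by omega)]
      have hBadL'' : ∀ i j, BadOf L'' i j → i < N - q ∧ j < N - q := by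
        rintro i j ⟨p, hp, hIi, hIj⟩
        have := hL''fit p hp
        omega
      rw [ES_closed x (BadOf L'') q q N le_rfl (by omega) hBadL'']
      have hL''len : L''.length = n := by
        rw [hL'', List.length_map]
        simpa using hlen
      have hL''disj : L''.Pairwise (fun p p' => p.2 = 0 ∨ p'.2 = 0 ∨ p.1 + p.2 ≤ p'.1 ∨ p'.1 + p'.2 ≤ p.1) := by
        rw [hL'', List.pairwise_map]
        refine List.Pairwise.imp_of_mem ?_ (List.pairwise_cons.1 hdisj).2
        intro p0 p1 h0 h1 hR
        have c0 := hdisj_head p0 h0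
        have c1 := hdisj_head p1 h1
        have f0 := hL'fit p0 h0
        have f1 := hL'fit p1 h1
        rw [hf]
        dsimp only
        rcases hR with h | h | h | h
        · split_ifs <;> tauto
        · split_ifs <;> tauto
        · split_ifs <;> omega
        · split_ifs <;> omega
      have hIH : ∀ a ∈ Finset.range (q+1), PS x (BadOf L'') (N - a)
          = RHSfun x (N-a) (L''.map Prod.snd) := by
        intro a ha
        rw [Finset.mem_range] at ha
        exact ih L'' (N - a) hL''len
          (fun p hp => by have := hL''fit p hp; omega) hL''disj
      rw [Finset.sum_congr rfl (fun a ha => by rw [hIH a ha])]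
      have hsnd : L''.map Prod.snd = L'.map Prod.snd := by
        rw [hL'', List.map_map]
        exact List.map_congr_left (fun p _ => by
          simp only [Function.comp_apply, hf]
          split_ifs <;> rfl)
      rw [hsnd]
      rw [show ((s,q)::L').map Prod.snd = q :: L'.map Prod.snd from rfl, RHSfun_cons]
      rw [← Finset.sum_range_reflect (fun k => (-1:ℝ)^(q-k) * (Nat.choose q k : ℝ) *
        (∏ t ∈ Finset.Ico k q, (x + (t:ℝ))) * RHSfun x (N - (q - k)) (L'.map Prod.snd)) (q+1)]
      apply Finset.sum_congr rfl
      intro a ha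
      rw [Finset.mem_range] at ha
      have e0 : q + 1 - 1 - a = q - a := by omega
      have e1 : q - (q - a) = a := by omega
      rw [e0, e1, Nat.choose_symm (by omega : a ≤ q)]

end Boxes
section Analytic
open Finset MeasureTheory

lemma Gamma_ratio (α : ℝ) (hα : -1 < α) (c : ℕ) :
    Real.Gamma (α + c + 1) = Real.Gamma (α+1) * ∏ t ∈ Finset.range c, (α + 1 + t) := by
  induction c with
  | zero => simp
  | succ c ih =>
    have h1 : α + ((c+1 : ℕ):ℝ) + 1 = (α + c + 1) + 1 := by push_cast; ring
    have h2 : (0:ℝ) < α + c + 1 := by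
      have : (0:ℝ) ≤ (c:ℝ) := Nat.cast_nonneg c
      linarith
    rw [h1, Real.Gamma_add_one (ne_of_gt h2), ih, Finset.prod_range_succ]
    push_cast
    ring

lemma integrand_eq (α : ℝ) (c k : ℕ) {t : ℝ} (ht : 0 < t) :
    Real.exp (-t) * t ^ (α + ((c+k:ℕ):ℝ) + 1 - 1) = t ^ ((c:ℝ)+α) * Real.exp (-t) * t^k := by
  have h1 : α + ((c+k:ℕ):ℝ) + 1 - 1 = ((c:ℝ)+α) + (k:ℝ) := by push_cast; ring
  rw [h1, Real.rpow_add ht, Real.rpow_natCast]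
  ring

lemma spos (α : ℝ) (hα : -1 < α) (c k : ℕ) : (0:ℝ) < α + ((c+k:ℕ):ℝ) + 1 := by
  have : (0:ℝ) ≤ ((c+k:ℕ):ℝ) := Nat.cast_nonneg _
  linarith

lemma integrable_mono (α : ℝ) (hα : -1 < α) (c k : ℕ) :
    MeasureTheory.IntegrableOn (fun x:ℝ => x ^ ((c:ℝ)+α) * Real.exp (-x) * x^k)
      (Set.Ioi 0) := by
  have h := Real.GammaIntegral_convergent (spos α hα c k)
  apply h.congr_fun ?_ measurableSet_Ioi
  intro t ht
  rw [Set.mem_Ioi] at ht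
  exact integrand_eq α c k ht

lemma integral_mono (α : ℝ) (hα : -1 < α) (c k : ℕ) :
    ∫ x in Set.Ioi (0:ℝ), x ^ ((c:ℝ)+α) * Real.exp (-x) * x^k
      = Real.Gamma (α + ((c+k:ℕ):ℝ) + 1) := by
  rw [Real.Gamma_eq_integral (spos α hα c k)]
  apply MeasureTheory.setIntegral_congr_fun measurableSet_Ioi
  intro t ht
  rw [Set.mem_Ioi] at ht
  exact (integrand_eq α c k ht).symm

noncomputable def lagP (α : ℝ) (n : ℕ) : Polynomial ℝ :=
  ∑ k ∈ Finset.range (n+1),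
    Polynomial.C ((-1:ℝ)^k * genBinom α n k / (Nat.factorial k : ℝ)) * Polynomial.X ^ k

lemma lagP_eval (α : ℝ) (n : ℕ) (y : ℝ) : (lagP α n).eval y = laguerre α n y := by
  rw [lagP, laguerre, Polynomial.eval_finset_sum]
  apply Finset.sum_congr rfl
  intro k _
  simp only [Polynomial.eval_mul, Polynomial.eval_C, Polynomial.eval_pow, Polynomial.eval_X]
  ring

lemma poly_expand (α : ℝ) (c : ℕ) (P : Polynomial ℝ) :
    (fun x:ℝ => x ^ ((c:ℝ)+α) * Real.exp (-x) * P.eval x)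
      = fun x => ∑ k ∈ Finset.range (P.natDegree+1),
          P.coeff k * (x ^ ((c:ℝ)+α) * Real.exp (-x) * x^k) := by
  funext y
  rw [Polynomial.eval_eq_sum_range, Finset.mul_sum]
  apply Finset.sum_congr rfl
  intro k _
  ring

lemma integrable_polyw (α : ℝ) (hα : -1 < α) (c : ℕ) (P : Polynomial ℝ) :
    MeasureTheory.IntegrableOn (fun x:ℝ => x ^ ((c:ℝ)+α) * Real.exp (-x) * P.eval x)
      (Set.Ioi 0) := by
  rw [poly_expand]
  apply MeasureTheory.integrable_finset_sum
  intro k _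
  exact (integrable_mono α hα c k).const_mul _

end Analytic
section GoalA
open Finset MeasureTheory

theorem goalA (α : ℝ) (hα : -1 < α) :
    ∀ (m : ℕ) (n : Fin m → ℕ) (n0 : ℕ),
    (-1 : ℝ) ^ (∑ j : Fin m, n j) / Real.Gamma (α + 1) *
        ∫ x in Set.Ioi (0 : ℝ), x ^ ((n0 : ℝ) + α) * Real.exp (-x) *
          ∏ j : Fin m, (Nat.factorial (n j) : ℝ) * laguerre α (n j) x
      = RHSfun (α+1) (n0 + total n) (List.ofFn n) := by
  have hΓ : Real.Gamma (α+1) ≠ 0 := ne_of_gt (Real.Gamma_pos_of_pos (by linarith))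
  intro m
  induction m with
  | zero =>
    intro n n0
    have h1 : (∫ x in Set.Ioi (0:ℝ), x ^ ((n0:ℝ)+α) * Real.exp (-x) *
        ∏ j : Fin 0, (Nat.factorial (n j) : ℝ) * laguerre α (n j) x)
        = ∫ x in Set.Ioi (0:ℝ), x ^ ((n0:ℝ)+α) * Real.exp (-x) * x^(0:ℕ) := by
      apply MeasureTheory.setIntegral_congr_fun measurableSet_Ioi
      intro t _
      simp
    rw [h1, integral_mono α hα n0 0]
    rw [show ((n0+0:ℕ):ℝ) = (n0:ℝ) by norm_num]
    rw [Gamma_ratio α hα n0]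
    rw [show (∑ j : Fin 0, n j) = 0 from rfl]
    rw [show List.ofFn n = ([] : List ℕ) from List.ofFn_zero, RHSfun_nil]
    rw [show total n = 0 from rfl, Nat.add_zero]
    field_simp
  | succ m ih =>
    intro n n0
    set Q : Polynomial ℝ :=
      ∏ j : Fin m, (Polynomial.C ((Nat.factorial (n j.succ) : ℝ)) * lagP α (n j.succ)) with hQ
    have hQeval : ∀ y : ℝ, Q.eval y
        = ∏ j : Fin m, ((Nat.factorial (n j.succ) : ℝ) * laguerre α (n j.succ) y) := by
      intro y
      rw [hQ, Polynomial.eval_prod]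
      exact Finset.prod_congr rfl (fun j _ => by
        rw [Polynomial.eval_mul, Polynomial.eval_C, lagP_eval])
    set c : ℕ → ℝ := fun k => (Nat.factorial (n 0) : ℝ) *
      ((-1:ℝ)^k * genBinom α (n 0) k / (Nat.factorial k : ℝ)) with hc
    have hsplit : ∀ y : ℝ, y ^ ((n0:ℝ)+α) * Real.exp (-y) *
        ∏ j : Fin (m+1), ((Nat.factorial (n j) : ℝ) * laguerre α (n j) y)
        = ∑ k ∈ Finset.range (n 0 + 1),
            c k * (y ^ ((n0:ℝ)+α) * Real.exp (-y) * (y^k * Q.eval y)) := by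
      intro y
      rw [Fin.prod_univ_succ, ← hQeval y, laguerre, Finset.mul_sum, Finset.sum_mul,
        Finset.mul_sum]
      apply Finset.sum_congr rfl
      intro k _
      rw [hc]
      ring
    have hI : (∫ x in Set.Ioi (0:ℝ), x ^ ((n0:ℝ)+α) * Real.exp (-x) *
          ∏ j : Fin (m+1), (Nat.factorial (n j) : ℝ) * laguerre α (n j) x)
        = ∑ k ∈ Finset.range (n 0 + 1), c k *
            ∫ x in Set.Ioi (0:ℝ), x ^ (((n0+k:ℕ):ℝ)+α) * Real.exp (-x) *
              ∏ j : Fin m, (Nat.factorial (n j.succ) : ℝ) * laguerre α (n j.succ) x := by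
      rw [show (∫ x in Set.Ioi (0:ℝ), x ^ ((n0:ℝ)+α) * Real.exp (-x) *
          ∏ j : Fin (m+1), (Nat.factorial (n j) : ℝ) * laguerre α (n j) x)
          = ∫ x in Set.Ioi (0:ℝ), ∑ k ∈ Finset.range (n 0+1),
              c k * (x ^ ((n0:ℝ)+α) * Real.exp (-x) *
                Polynomial.eval x (Polynomial.X^k * Q)) from
        MeasureTheory.setIntegral_congr_fun measurableSet_Ioi (fun t _ => by
          rw [hsplit t]
          exact Finset.sum_congr rfl (fun k _ => by
            rw [Polynomial.eval_mul, Polynomial.eval_pow, Polynomial.eval_X]))]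
      rw [MeasureTheory.integral_finset_sum _
        (fun k _ => ((integrable_polyw α hα n0 (Polynomial.X^k * Q)).const_mul (c k)))]
      apply Finset.sum_congr rfl
      intro k hk
      rw [MeasureTheory.integral_const_mul]
      congr 1
      apply MeasureTheory.setIntegral_congr_fun measurableSet_Ioi
      intro t ht
      rw [Set.mem_Ioi] at ht
      dsimp only
      rw [Polynomial.eval_mul, Polynomial.eval_pow, Polynomial.eval_X, hQeval t]
      have hpow : (t:ℝ) ^ (((n0+k:ℕ):ℝ)+α) = t ^ ((n0:ℝ)+α) * t^k := by
        push_cast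
        rw [show (n0:ℝ)+(k:ℝ)+α = ((n0:ℝ)+α) + (k:ℝ) by ring, Real.rpow_add ht,
          Real.rpow_natCast]
      rw [hpow]
      ring
    rw [hI, Finset.mul_sum]
    rw [show List.ofFn n = n 0 :: List.ofFn (fun j : Fin m => n j.succ) from List.ofFn_succ]
    rw [RHSfun_cons]
    apply Finset.sum_congr rfl
    intro k hk
    rw [Finset.mem_range] at hk
    have hk' : k ≤ n 0 := by omega
    have htot : total n = n 0 + total (fun j : Fin m => n j.succ) := by
      rw [total, total, Fin.sum_univ_succ]
    have hNeq : n0 + total n - (n 0 - k) = (n0 + k) + total (fun j : Fin m => n j.succ) := by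
      omega
    rw [hNeq, ← ih (fun j : Fin m => n j.succ) (n0 + k)]
    have hsum_split : (∑ j : Fin (m+1), n j) = n 0 + ∑ j : Fin m, n j.succ :=
      Fin.sum_univ_succ n
    rw [hsum_split, hc]
    simp only [genBinom]
    rw [Nat.cast_choose ℝ hk']
    have hprod_eq : (∏ t ∈ Finset.Ico k (n 0), (α + (t:ℝ) + 1))
        = ∏ t ∈ Finset.Ico k (n 0), ((α+1) + (t:ℝ)) := by
      apply Finset.prod_congr rfl
      intro t _
      ring
    rw [hprod_eq]
    set S' := ∑ j : Fin m, n j.succ with hS'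
    set I := ∫ x in Set.Ioi (0:ℝ), x ^ (((n0+k:ℕ):ℝ)+α) * Real.exp (-x) *
              ∏ j : Fin m, (Nat.factorial (n j.succ) : ℝ) * laguerre α (n j.succ) x with hIdef
    set P := ∏ t ∈ Finset.Ico k (n 0), ((α+1) + (t:ℝ)) with hP
    have hpow2 : (-1:ℝ)^(n 0 + S' + k) = (-1:ℝ)^((n 0 - k) + S') := by
      rw [show n 0 + S' + k = ((n 0 - k) + S') + 2*k by omega, pow_add, pow_mul]
      norm_num
    have lhs_eq : (-1:ℝ)^(n 0 + S')/Real.Gamma (α+1) *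
        ((Nat.factorial (n 0) : ℝ) * ((-1:ℝ)^k * (P/(Nat.factorial (n 0 - k) : ℝ)) /
          (Nat.factorial k : ℝ)) * I)
        = (-1:ℝ)^(n 0 + S' + k) * ((Nat.factorial (n 0) : ℝ) * P * I /
            ((Nat.factorial (n 0 - k) : ℝ) * (Nat.factorial k : ℝ) * Real.Gamma (α+1))) := by
      rw [pow_add]
      ring
    have rhs_eq : (-1:ℝ)^(n 0 - k) *
        ((Nat.factorial (n 0) : ℝ)/((Nat.factorial k : ℝ) * (Nat.factorial (n 0 - k) : ℝ))) *
        P * ((-1:ℝ)^(S')/Real.Gamma (α+1) * I)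
        = (-1:ℝ)^((n 0 - k) + S') * ((Nat.factorial (n 0) : ℝ) * P * I /
            ((Nat.factorial (n 0 - k) : ℝ) * (Nat.factorial k : ℝ) * Real.Gamma (α+1))) := by
      rw [pow_add]
      ring
    rw [lhs_eq, rhs_eq, hpow2]

end GoalA

/-- The permutations of `[N]` in which no element of a box `S_j`, `1 ≤ j ≤ m`,
stays in its box; box `S_0` is unrestricted. -/
noncomputable def freeBoxPerms (n0 : ℕ) {m : ℕ} (n : Fin m → ℕ) :
    Finset (Equiv.Perm (Fin (total (Fin.cons n0 n : Fin (m + 1) → ℕ)))) :=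
  Finset.univ.filter fun π => ∀ i : Fin (total (Fin.cons n0 n : Fin (m + 1) → ℕ)),
    ∀ j : Fin (m + 1), j ≠ 0 →
      inBox (Fin.cons n0 n : Fin (m + 1) → ℕ) j (i : ℕ) →
        ¬ inBox (Fin.cons n0 n : Fin (m + 1) → ℕ) j ((π i : ℕ))

section Bridge
open Equiv Equiv.Perm Finset

variable {m : ℕ}

lemma total_cons (n0 : ℕ) (n : Fin m → ℕ) :
    total (Fin.cons n0 n : Fin (m+1) → ℕ) = n0 + total n := by
  rw [total, total, Fin.sum_univ_succ]
  simp

lemma psum_succ_eq (n0 : ℕ) (n : Fin m → ℕ) (j : Fin m) :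
    psum (Fin.cons n0 n : Fin (m+1) → ℕ) j.succ = n0 + psum n j := by
  rw [psum, psum, Fin.sum_univ_succ]
  congr 1
  · simp [Fin.succ_pos]

lemma psum_add_le (n : Fin m → ℕ) (j : Fin m) : psum n j + n j ≤ total n := by
  have h1 : psum n j + n j = ∑ t, ((if t < j then n t else 0) + (if t = j then n t else 0)) := by
    rw [Finset.sum_add_distrib, ← psum]
    congr 1
    rw [Finset.sum_ite_eq' Finset.univ j n]
    simp
  rw [h1, total]
  apply Finset.sum_le_sum
  intro t _
  split_ifs with h1' h2'
  · omega
  · omega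
  · omega
  · omega

lemma psum_lt_mono (n : Fin m → ℕ) (j j' : Fin m) (h : j < j') :
    psum n j + n j ≤ psum n j' := by
  have h1 : psum n j + n j = ∑ t, ((if t < j then n t else 0) + (if t = j then n t else 0)) := by
    rw [Finset.sum_add_distrib, ← psum]
    congr 1
    rw [Finset.sum_ite_eq' Finset.univ j n]
    simp
  rw [h1, psum]
  apply Finset.sum_le_sum
  intro t _
  by_cases ht : t < j
  · rw [if_pos ht, if_neg (by intro hc; subst hc; exact absurd ht (lt_irrefl _)),
      if_pos (lt_trans ht h)]
    omega
  · rw [if_neg ht]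
    by_cases ht2 : t = j
    · subst ht2
      rw [if_pos rfl, if_pos h]
      omega
    · rw [if_neg ht2]
      split_ifs <;> omega

/-- The list of boxes `1, …, m` (start, size). -/
def boxesL (n0 : ℕ) (n : Fin m → ℕ) : List (ℕ × ℕ) :=
  List.ofFn (fun j : Fin m => (n0 + psum n j, n j))

lemma freeBox_eq_PS (x : ℝ) (n0 : ℕ) (n : Fin m → ℕ) :
    (∑ π ∈ freeBoxPerms n0 n, x ^ cyc π)
      = PS x (BadOf (boxesL n0 n)) (total (Fin.cons n0 n : Fin (m+1) → ℕ)) := by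
  rw [freeBoxPerms, PS]
  congr 1
  apply Finset.filter_congr
  intro π _
  constructor
  · intro h i hbad
    obtain ⟨p, hp, hIi, hIk⟩ := hbad
    rw [boxesL, List.mem_ofFn] at hp
    obtain ⟨j, rfl⟩ := hp
    refine h i j.succ (Fin.succ_ne_zero j) ?_ ?_
    · rw [inBox, psum_succ_eq]
      exact ⟨hIi.1, hIi.2⟩
    · rw [inBox, psum_succ_eq]
      exact ⟨hIk.1, hIk.2⟩
  · intro h i j hj hin hin'
    obtain ⟨j', rfl⟩ := Fin.eq_succ_of_ne_zero hj
    rw [inBox, psum_succ_eq] at hin hin'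
    exact h i ⟨(n0 + psum n j', n j'), by
      rw [boxesL, List.mem_ofFn]; exact ⟨j', rfl⟩, ⟨hin.1, hin.2⟩, ⟨hin'.1, hin'.2⟩⟩

lemma boxesL_fit (n0 : ℕ) (n : Fin m → ℕ) :
    ∀ p ∈ boxesL n0 n, p.1 + p.2 ≤ total (Fin.cons n0 n : Fin (m+1) → ℕ) := by
  intro p hp
  rw [boxesL, List.mem_ofFn] at hp
  obtain ⟨j, rfl⟩ := hp
  rw [total_cons]
  have := psum_add_le n j
  simp only []
  omega

lemma boxesL_disj (n0 : ℕ) (n : Fin m → ℕ) :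
    (boxesL n0 n).Pairwise
      (fun p p' => p.2 = 0 ∨ p'.2 = 0 ∨ p.1 + p.2 ≤ p'.1 ∨ p'.1 + p'.2 ≤ p.1) := by
  rw [boxesL, List.pairwise_ofFn]
  intro j j' hjj'
  have := psum_lt_mono n j j' hjj'
  right; right; left
  simp only []
  omega

lemma boxesL_snd (n0 : ℕ) (n : Fin m → ℕ) :
    (boxesL n0 n).map Prod.snd = List.ofFn n := by
  rw [boxesL, List.map_ofFn]
  rfl

/-- Combinatorial side, fully reduced. -/
theorem comb_main (x : ℝ) (n0 : ℕ) (n : Fin m → ℕ) :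
    (∑ π ∈ freeBoxPerms n0 n, x ^ cyc π)
      = RHSfun x (total (Fin.cons n0 n : Fin (m+1) → ℕ)) (List.ofFn n) := by
  rw [freeBox_eq_PS, goalC x (boxesL n0 n).length (boxesL n0 n) _ rfl
    (boxesL_fit n0 n) (boxesL_disj n0 n), boxesL_snd]

end Bridge

/-- the Laguerre integral with extra factor `x^{n_0}` counts
permutations with the `0`-th box unrestricted, weighted by `(α+1)^{cyc}`. -/
theorem laguerre_moment_linearization (α : ℝ) (hα : -1 < α) (n0 : ℕ) {m : ℕ}
    (n : Fin m → ℕ) :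
    (-1 : ℝ) ^ (∑ j : Fin m, n j) / Real.Gamma (α + 1) *
        ∫ x in Set.Ioi (0 : ℝ), x ^ ((n0 : ℝ) + α) * Real.exp (-x) *
          ∏ j : Fin m, (Nat.factorial (n j) : ℝ) * laguerre α (n j) x
      = ∑ π ∈ freeBoxPerms n0 n, (α + 1) ^ cyc π := by
  rw [goalA α hα m n n0, comb_main (α+1) n0 n, total_cons]

end Paper
end

section
/- For all nonnegative integers m, n, s: (−1)^{m+n} ∫_0^∞ x^s e^{-x}·m! L_m(x)·n! L_n(x) dx = m!·n!·s!·Σ_{j≥0} binom(m,j)·binom(s, n+j−m)·binom(s+m−j, m), where L_n = L_n^{(0)} is the simple Laguerre polynomial and binomial coefficients with out-of-range arguments are 0. -/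
open Finset MeasureTheory

namespace Paper

lemma integrable_pow_exp (p : ℕ) :
    IntegrableOn (fun x : ℝ => x ^ p * Real.exp (-x)) (Set.Ioi 0) := by
  have h := Real.GammaIntegral_convergent (s := (p : ℝ) + 1) (by positivity)
  apply h.congr_fun ?_ measurableSet_Ioi
  intro x hx
  simp only [Set.mem_Ioi] at hx
  rw [show ((p:ℝ) + 1 - 1) = (p:ℝ) by ring]
  simp [Real.rpow_natCast, mul_comm]

lemma integral_pow_exp (p : ℕ) :
    ∫ x in Set.Ioi (0:ℝ), x ^ p * Real.exp (-x) = (Nat.factorial p : ℝ) := by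
  have h := Real.Gamma_eq_integral (s := (p : ℝ) + 1) (by positivity)
  rw [Real.Gamma_nat_eq_factorial p] at h
  rw [h]
  apply setIntegral_congr_fun measurableSet_Ioi
  intro x hx
  simp only [Set.mem_Ioi] at hx
  rw [show ((p:ℝ) + 1 - 1) = (p:ℝ) by ring]
  simp [Real.rpow_natCast, mul_comm]

lemma altsum (b : ℕ) : ∀ (N : ℕ), ∀ (a : ℕ),
    ∑ i ∈ range (N+1), (-1:ℝ)^i * (N.choose i) * ((a+i).choose b)
      = (-1:ℝ)^N * (if N ≤ b then ((a.choose (b-N) : ℕ):ℝ) else 0) := by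
  intro N
  induction N with
  | zero => intro a; simp
  | succ N ih =>
    intro a
    have g0 : ∀ i, (-1:ℝ)^i * (N.choose i) * ((a+i).choose b) = (fun i => (-1:ℝ)^i * (N.choose i) * ((a+i).choose b)) i := fun _ => rfl
    have step : ∑ i ∈ range (N+2), (-1:ℝ)^i * ((N+1).choose i) * ((a+i).choose b)
        = (∑ i ∈ range (N+1), (-1:ℝ)^i * (N.choose i) * ((a+i).choose b))
          - ∑ i ∈ range (N+1), (-1:ℝ)^i * (N.choose i) * (((a+1)+i).choose b) := by
      rw [Finset.sum_range_succ' (fun i => (-1:ℝ)^i * ((N+1).choose i) * ((a+i).choose b)) (N+1)]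
      have e1 : ∀ i, (-1:ℝ)^(i+1) * ((N+1).choose (i+1)) * ((a+(i+1)).choose b)
          = -((-1:ℝ)^i * (N.choose i) * (((a+1)+i).choose b))
            + (-1:ℝ)^(i+1) * (N.choose (i+1)) * ((a+(i+1)).choose b) := by
        intro i
        rw [Nat.choose_succ_succ]
        push_cast
        have : a + (i+1) = (a+1) + i := by ring
        rw [this]
        ring
      rw [Finset.sum_congr rfl (fun i _ => e1 i), Finset.sum_add_distrib]
      have e2 : ∑ i ∈ range (N+1), ((-1:ℝ)^(i+1) * (N.choose (i+1)) * ((a+(i+1)).choose b))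
          = (∑ i ∈ range (N+1), (-1:ℝ)^i * (N.choose i) * ((a+i).choose b))
              - (-1:ℝ)^0 * (N.choose 0) * ((a+0).choose b) := by
        have h3 := Finset.sum_range_succ' (fun i => (-1:ℝ)^i * (N.choose i) * ((a+i).choose b)) (N+1)
        have h4 := Finset.sum_range_succ (fun i => (-1:ℝ)^i * (N.choose i) * ((a+i).choose b)) (N+1)
        have h5 : (N.choose (N+1) : ℝ) = 0 := by
          rw [Nat.choose_succ_self]; norm_num
        rw [h4] at h3
        rw [h5] at h3
        simp only [mul_zero, zero_mul, mul_assoc] at h3 ⊢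
        linarith [h3]
      rw [e2, Finset.sum_neg_distrib]
      simp
      ring
    rw [step, ih a, ih (a+1)]
    by_cases h1 : N + 1 ≤ b
    · have h2 : N ≤ b := Nat.le_of_succ_le h1
      simp only [if_pos h1, if_pos h2]
      have ht : b - N = (b - (N+1)) + 1 := by omega
      rw [ht, Nat.choose_succ_succ]
      push_cast
      ring
    · by_cases h2 : N ≤ b
      · simp only [if_neg h1, if_pos h2]
        have hz : b - N = 0 := by omega
        rw [hz]
        simp
      · simp only [if_neg h1, if_neg h2]
        ring

lemma prodIco (k : ℕ) : ∀ n, k ≤ n → k.factorial * ∏ t ∈ Ico k n, (t+1) = n.factorial := by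
  intro n
  induction n with
  | zero => intro h; interval_cases k; simp
  | succ n ih =>
    intro h
    rcases Nat.lt_or_ge k (n+1) with h' | h'
    · have hk : k ≤ n := by omega
      rw [Finset.prod_Ico_succ_top hk, ← mul_assoc, ih hk, Nat.factorial_succ, mul_comm]
    · have : k = n + 1 := by omega
      subst this
      simp

lemma genBinom_zero (m k : ℕ) (h : k ≤ m) : genBinom 0 m k = (m.choose k : ℝ) := by
  unfold genBinom
  have hp : (k.factorial * ∏ t ∈ Ico k m, (t+1) : ℕ) = m.factorial := prodIco k m h
  have hprod : (∏ t ∈ Ico k m, ((0:ℝ) + t + 1)) = ((∏ t ∈ Ico k m, (t+1) : ℕ) : ℝ) := by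
    push_cast
    exact Finset.prod_congr rfl (fun t _ => by ring)
  rw [hprod]
  rw [eq_comm, eq_div_iff (by positivity)]
  have := Nat.choose_mul_factorial_mul_factorial h
  have hcast : ((m.choose k : ℕ):ℝ) * ((m-k).factorial : ℝ) * (k.factorial : ℝ) = (m.factorial : ℝ) := by
    push_cast [← this]; ring
  have hc2 : (k.factorial : ℝ) * ((∏ t ∈ Ico k m, (t+1) : ℕ) : ℝ) = (m.factorial : ℝ) := by
    exact_mod_cast congrArg (Nat.cast : ℕ → ℝ) hp
  have hkf : (k.factorial : ℝ) ≠ 0 := by positivity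
  field_simp at hcast hc2 ⊢
  nlinarith [hcast, hc2, Nat.factorial_pos k, (by positivity : (0:ℝ) < (k.factorial:ℝ))]

def A (m k : ℕ) : ℕ := m.choose k * m.choose k * (m - k).factorial

lemma fact_laguerre (m : ℕ) (x : ℝ) :
    (m.factorial : ℝ) * laguerre 0 m x
      = ∑ k ∈ range (m+1), (-1:ℝ)^k * (A m k : ℝ) * x ^ k := by
  unfold laguerre
  rw [Finset.mul_sum]
  apply Finset.sum_congr rfl
  intro k hk
  have hkm : k ≤ m := by simpa [Nat.lt_succ_iff] using hk
  rw [genBinom_zero m k hkm]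
  have h := Nat.choose_mul_factorial_mul_factorial hkm
  have hcast : ((m.choose k : ℕ):ℝ) * (k.factorial : ℝ) * ((m-k).factorial : ℝ) = (m.factorial : ℝ) := by
    exact_mod_cast congrArg (Nat.cast : ℕ → ℝ) h
  unfold A
  push_cast
  have hkf : (k.factorial : ℝ) ≠ 0 := by positivity
  field_simp
  linear_combination (-(m.choose k : ℝ) * x^k) * hcast

-- A n l * (T+l)! = C(n,l) * n! * T! * C(T+l,l)
lemma A_mul_fact (n l T : ℕ) (h : l ≤ n) :
    (A n l : ℝ) * ((T+l).factorial : ℝ)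
      = (n.choose l : ℝ) * (n.factorial : ℝ) * (T.factorial : ℝ) * (((T+l).choose l : ℕ) : ℝ) := by
  have h1 : ((n.choose l : ℕ):ℝ) * (l.factorial:ℝ) * ((n-l).factorial:ℝ) = (n.factorial:ℝ) := by
    exact_mod_cast congrArg (Nat.cast : ℕ → ℝ) (Nat.choose_mul_factorial_mul_factorial h)
  have h2 : (((T+l).choose l : ℕ):ℝ) * (l.factorial:ℝ) * (T.factorial:ℝ) = ((T+l).factorial:ℝ) := by
    have := Nat.choose_mul_factorial_mul_factorial (Nat.le_add_left l T)
    rw [Nat.add_sub_cancel] at this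
    exact_mod_cast congrArg (Nat.cast : ℕ → ℝ) this
  have hl : (l.factorial : ℝ) ≠ 0 := by positivity
  unfold A
  push_cast
  apply mul_left_cancel₀ hl
  linear_combination ((n.choose l : ℝ) * ((T+l).factorial:ℝ)) * h1 - ((n.choose l:ℝ) * (n.factorial:ℝ)) * h2


lemma altsum_self (n T : ℕ) :
    ∑ l ∈ range (n+1), (-1:ℝ)^l * (n.choose l) * (((T+l).choose l : ℕ) : ℝ)
      = (-1:ℝ)^n * (T.choose n) := by
  have h := altsum T n T
  have e : ∀ l, ((T+l).choose l : ℕ) = (T+l).choose T := fun l => (Nat.choose_symm_add).symm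
  calc ∑ l ∈ range (n+1), (-1:ℝ)^l * (n.choose l) * (((T+l).choose l : ℕ) : ℝ)
      = ∑ l ∈ range (n+1), (-1:ℝ)^l * (n.choose l) * (((T+l).choose T : ℕ) : ℝ) := by
        apply Finset.sum_congr rfl; intro l _; rw [e l]
    _ = (-1:ℝ)^n * (if n ≤ T then ((T.choose (T-n) : ℕ):ℝ) else 0) := h
    _ = (-1:ℝ)^n * (T.choose n) := by
        congr 1
        by_cases hn : n ≤ T
        · rw [if_pos hn, Nat.choose_symm hn]
        · rw [if_neg hn, Nat.choose_eq_zero_of_lt (by omega)]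
          simp

-- inner sum over l
lemma inner_sum (n T : ℕ) :
    ∑ l ∈ range (n+1), (-1:ℝ)^l * (A n l : ℝ) * ((T+l).factorial : ℝ)
      = (-1:ℝ)^n * (n.factorial : ℝ) * (T.factorial : ℝ) * (T.choose n : ℝ) := by
  have e : ∀ l ∈ range (n+1), (-1:ℝ)^l * (A n l : ℝ) * ((T+l).factorial : ℝ)
      = ((n.factorial : ℝ) * (T.factorial : ℝ)) * ((-1:ℝ)^l * (n.choose l : ℝ) * (((T+l).choose l : ℕ):ℝ)) := by
    intro l hl
    have hln : l ≤ n := by simpa [Nat.lt_succ_iff] using hl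
    rw [mul_assoc, A_mul_fact n l T hln]
    ring
  rw [Finset.sum_congr rfl e, ← Finset.mul_sum, altsum_self]
  ring

-- inner k-sum for fixed J
lemma ksub (m s J : ℕ) :
    ∑ k ∈ range (m+1), (-1:ℝ)^k * (m.choose k) * (k.choose J) * ((s+k).choose s)
      = (-1:ℝ)^m * (m.choose J) * (((s+J).choose m : ℕ) : ℝ) := by
  by_cases hJ : J ≤ m
  · have hsplit : ∑ k ∈ range (m+1), (-1:ℝ)^k * (m.choose k) * (k.choose J) * ((s+k).choose s)
        = ∑ k ∈ Ico J (m+1), (-1:ℝ)^k * (m.choose k) * (k.choose J) * ((s+k).choose s) := by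
      rw [Finset.range_eq_Ico, ← Finset.sum_Ico_consecutive _ (Nat.zero_le J) (by omega)]
      have : ∑ k ∈ Ico 0 J, (-1:ℝ)^k * (m.choose k) * (k.choose J) * ((s+k).choose s) = 0 := by
        apply Finset.sum_eq_zero
        intro k hk
        simp only [Finset.mem_Ico] at hk
        rw [Nat.choose_eq_zero_of_lt hk.2]
        simp
      rw [this, zero_add]
    rw [hsplit, Finset.sum_Ico_eq_sum_range]
    have hm1 : m + 1 - J = (m - J) + 1 := by omega
    rw [hm1]
    have e : ∀ i ∈ range ((m-J)+1), (-1:ℝ)^(J+i) * (m.choose (J+i)) * ((J+i).choose J) * ((s+(J+i)).choose s)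
        = ((-1:ℝ)^J * (m.choose J)) * ((-1:ℝ)^i * ((m-J).choose i) * ((((s+J)+i).choose s : ℕ):ℝ)) := by
      intro i hi
      have hki : J + i ≤ m := by simp only [Finset.mem_range] at hi; omega
      have hc := Nat.choose_mul (n := m) (k := J+i) (s := J) (Nat.le_add_right J i)
      have hc' : ((m.choose (J+i) : ℕ):ℝ) * ((J+i).choose J : ℝ)
          = (m.choose J : ℝ) * (((m-J).choose ((J+i)-J) : ℕ):ℝ) := by exact_mod_cast congrArg (Nat.cast : ℕ → ℝ) hc
      rw [Nat.add_sub_cancel_left] at hc'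
      have harg : s + (J + i) = (s + J) + i := by ring
      rw [harg, pow_add]
      linear_combination ((-1:ℝ)^J * (-1:ℝ)^i * (((s+J)+i).choose s : ℝ)) * hc'
    rw [Finset.sum_congr rfl e, ← Finset.mul_sum, altsum s (m-J) (s+J)]
    have hsign : (-1:ℝ)^J * (-1:ℝ)^(m-J) = (-1:ℝ)^m := by
      rw [← pow_add]
      congr 1
      omega
    by_cases hms : m - J ≤ s
    · rw [if_pos hms]
      have : (s + J).choose (s - (m - J)) = (s+J).choose m := by
        have h1 : m ≤ s + J := by omega
        have h2 : s - (m - J) = (s + J) - m := by omega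
        rw [h2, Nat.choose_symm h1]
      rw [this]
      rw [show ((-1:ℝ)^J * (m.choose J : ℝ)) * ((-1:ℝ)^(m-J) * (((s+J).choose m : ℕ):ℝ))
          = ((-1:ℝ)^J * (-1:ℝ)^(m-J)) * (m.choose J : ℝ) * (((s+J).choose m : ℕ):ℝ) by ring, hsign]
    · rw [if_neg hms]
      have : (s+J).choose m = 0 := Nat.choose_eq_zero_of_lt (by omega)
      rw [this]
      push_cast
      ring
  · have h0 : ∀ k ∈ range (m+1), (-1:ℝ)^k * (m.choose k) * (k.choose J) * ((s+k).choose s) = 0 := by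
      intro k hk
      simp only [Finset.mem_range] at hk
      rw [Nat.choose_eq_zero_of_lt (show k < J by omega)]
      simp
    rw [Finset.sum_eq_zero h0, Nat.choose_eq_zero_of_lt (by omega)]
    simp

lemma ksum (m s n : ℕ) :
    ∑ k ∈ range (m+1), (-1:ℝ)^k * (m.choose k) * ((s+k).choose s) * (((s+k).choose n : ℕ):ℝ)
      = (-1:ℝ)^m * ∑ j ∈ range (n+1), (s.choose (n-j) : ℝ) * (m.choose j) * (((s+j).choose m : ℕ):ℝ) := by
  have hV : ∀ k, (((s+k).choose n : ℕ):ℝ) = ∑ j ∈ range (n+1), (s.choose j : ℝ) * ((k.choose (n-j) : ℕ):ℝ) := by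
    intro k
    have := Nat.add_choose_eq s k n
    rw [Nat.sum_antidiagonal_eq_sum_range_succ (fun a b => s.choose a * k.choose b) n] at this
    rw [this]
    push_cast
    rfl
  calc ∑ k ∈ range (m+1), (-1:ℝ)^k * (m.choose k) * ((s+k).choose s) * (((s+k).choose n : ℕ):ℝ)
      = ∑ k ∈ range (m+1), ∑ j ∈ range (n+1),
          (s.choose j : ℝ) * ((-1:ℝ)^k * (m.choose k) * (k.choose (n-j)) * ((s+k).choose s)) := by
        apply Finset.sum_congr rfl
        intro k _
        rw [hV k, Finset.mul_sum]
        apply Finset.sum_congr rfl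
        intro j _
        ring
    _ = ∑ j ∈ range (n+1), (s.choose j : ℝ) *
          ∑ k ∈ range (m+1), ((-1:ℝ)^k * (m.choose k) * (k.choose (n-j)) * ((s+k).choose s)) := by
        rw [Finset.sum_comm]
        apply Finset.sum_congr rfl
        intro j _
        rw [Finset.mul_sum]
    _ = ∑ j ∈ range (n+1), (s.choose j : ℝ) * ((-1:ℝ)^m * (m.choose (n-j)) * (((s+(n-j)).choose m : ℕ):ℝ)) := by
        apply Finset.sum_congr rfl
        intro j _
        rw [ksub m s (n-j)]
    _ = (-1:ℝ)^m * ∑ j ∈ range (n+1), (s.choose j : ℝ) * (m.choose (n-j)) * (((s+(n-j)).choose m : ℕ):ℝ) := by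
        rw [Finset.mul_sum]
        apply Finset.sum_congr rfl
        intro j _
        ring
    _ = (-1:ℝ)^m * ∑ j ∈ range (n+1), (s.choose (n-j) : ℝ) * (m.choose j) * (((s+j).choose m : ℕ):ℝ) := by
        congr 1
        rw [← Finset.sum_range_reflect (fun j => (s.choose (n-j) : ℝ) * (m.choose j) * (((s+j).choose m : ℕ):ℝ)) (n+1)]
        apply Finset.sum_congr rfl
        intro j hj
        simp only [Finset.mem_range] at hj
        have h1 : n + 1 - 1 - j = n - j := by omega
        have h2 : n - (n - j) = j := by omega
        rw [h1, h2]

lemma main_sum (m n s : ℕ) :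
    ∑ k ∈ range (m+1), ∑ l ∈ range (n+1),
        (-1:ℝ)^(k+l) * (A m k : ℝ) * (A n l : ℝ) * (((s+k+l).factorial : ℕ):ℝ)
      = (-1:ℝ)^(m+n) * (m.factorial : ℝ) * (n.factorial : ℝ) * (s.factorial : ℝ) *
          ∑ j ∈ range (n+1), (s.choose (n-j) : ℝ) * (m.choose j) * (((s+j).choose m : ℕ):ℝ) := by
  have hinner : ∀ k ∈ range (m+1),
      ∑ l ∈ range (n+1), (-1:ℝ)^(k+l) * (A m k : ℝ) * (A n l : ℝ) * (((s+k+l).factorial : ℕ):ℝ)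
        = ((-1:ℝ)^n * (n.factorial : ℝ)) * ((-1:ℝ)^k * (A m k : ℝ) * (((s+k).factorial : ℕ):ℝ) * (((s+k).choose n : ℕ):ℝ)) := by
    intro k hk
    have e : ∀ l ∈ range (n+1), (-1:ℝ)^(k+l) * (A m k : ℝ) * (A n l : ℝ) * (((s+k+l).factorial : ℕ):ℝ)
        = ((-1:ℝ)^k * (A m k : ℝ)) * ((-1:ℝ)^l * (A n l : ℝ) * ((((s+k)+l).factorial : ℕ):ℝ)) := by
      intro l _
      rw [pow_add]
      ring_nf
    rw [Finset.sum_congr rfl e, ← Finset.mul_sum, inner_sum n (s+k)]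
    ring
  rw [Finset.sum_congr rfl hinner, ← Finset.mul_sum]
  have e2 : ∀ k ∈ range (m+1),
      (-1:ℝ)^k * (A m k : ℝ) * (((s+k).factorial : ℕ):ℝ) * (((s+k).choose n : ℕ):ℝ)
        = ((m.factorial : ℝ) * (s.factorial : ℝ)) * ((-1:ℝ)^k * (m.choose k : ℝ) * (((s+k).choose s : ℕ):ℝ) * (((s+k).choose n : ℕ):ℝ)) := by
    intro k hk
    have hkm : k ≤ m := by simpa [Nat.lt_succ_iff] using hk
    have h := A_mul_fact m k s hkm
    have hsym : ((s+k).choose k : ℕ) = (s+k).choose s := (Nat.choose_symm_add).symm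
    rw [hsym] at h
    linear_combination ((-1:ℝ)^k * ((s+k).choose n : ℝ)) * h
  rw [Finset.sum_congr rfl e2, ← Finset.mul_sum, ksum m s n]
  rw [pow_add]
  ring

/-- an explicit evaluation of
`(-1)^{m+n} ∫_0^∞ x^s e^{-x} m!L_m(x) n!L_n(x) dx` (Corollary on `A⁽⁰⁾(m,n,s)`).
Out-of-range binomial coefficients are `0`. -/
theorem laguerre_pair_moment (m n s : ℕ) :
    (-1 : ℝ) ^ (m + n) *
        ∫ x in Set.Ioi (0 : ℝ), x ^ s * Real.exp (-x) *
          ((Nat.factorial m : ℝ) * laguerre 0 m x) *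
            ((Nat.factorial n : ℝ) * laguerre 0 n x)
      = (Nat.factorial m : ℝ) * (Nat.factorial n : ℝ) * (Nat.factorial s : ℝ) *
          ∑' j : ℕ, (Nat.choose m j : ℝ) *
            (if m ≤ n + j then (Nat.choose s (n + j - m) : ℝ) else 0) *
              (Nat.choose (s + m - j) m : ℝ) := by
  -- pointwise expansion of the integrand
  have hfun : ∀ x : ℝ, x ^ s * Real.exp (-x) * ((Nat.factorial m : ℝ) * laguerre 0 m x) *
        ((Nat.factorial n : ℝ) * laguerre 0 n x)
      = ∑ k ∈ range (m+1), ∑ l ∈ range (n+1),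
          ((-1:ℝ)^(k+l) * (A m k : ℝ) * (A n l : ℝ)) * (x ^ (s+k+l) * Real.exp (-x)) := by
    intro x
    rw [fact_laguerre, fact_laguerre, mul_assoc, Finset.sum_mul_sum, Finset.mul_sum]
    apply Finset.sum_congr rfl
    intro k _
    rw [Finset.mul_sum]
    apply Finset.sum_congr rfl
    intro l _
    rw [show s + k + l = s + (k + l) by ring, pow_add x s (k+l), pow_add x k l, pow_add (-1:ℝ) k l]
    ring
  -- evaluate the integral
  have hint : (∫ x in Set.Ioi (0:ℝ), x ^ s * Real.exp (-x) * ((Nat.factorial m : ℝ) * laguerre 0 m x) *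
        ((Nat.factorial n : ℝ) * laguerre 0 n x))
      = ∑ k ∈ range (m+1), ∑ l ∈ range (n+1),
          (-1:ℝ)^(k+l) * (A m k : ℝ) * (A n l : ℝ) * (((s+k+l).factorial : ℕ) : ℝ) := by
    rw [MeasureTheory.setIntegral_congr_fun measurableSet_Ioi (fun x _ => hfun x)]
    rw [MeasureTheory.integral_finset_sum]
    · apply Finset.sum_congr rfl
      intro k _
      rw [MeasureTheory.integral_finset_sum]
      · apply Finset.sum_congr rfl
        intro l _
        rw [integral_const_mul, integral_pow_exp]
      · intro l _
        exact (integrable_pow_exp (s+k+l)).const_mul _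
    · intro k _
      apply MeasureTheory.integrable_finset_sum
      intro l _
      exact (integrable_pow_exp (s+k+l)).const_mul _
  rw [hint, main_sum]
  -- rhs : tsum to finite sum
  have hsupp : ∀ j ∉ range (m+1), (Nat.choose m j : ℝ) *
      (if m ≤ n + j then (Nat.choose s (n + j - m) : ℝ) else 0) *
        (Nat.choose (s + m - j) m : ℝ) = 0 := by
    intro j hj
    simp only [Finset.mem_range, not_lt] at hj
    rw [Nat.choose_eq_zero_of_lt (by omega)]
    simp
  rw [tsum_eq_sum hsupp]
  -- reflect the rhs sum
  have hstep1 : ∑ j ∈ range (m+1), (Nat.choose m j : ℝ) *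
        (if m ≤ n + j then (Nat.choose s (n + j - m) : ℝ) else 0) *
          (Nat.choose (s + m - j) m : ℝ)
      = ∑ j ∈ range (m+1), (if j ≤ n then (1:ℝ) else 0) *
          ((s.choose (n-j) : ℝ) * (m.choose j : ℝ) * (((s+j).choose m : ℕ) : ℝ)) := by
    rw [← Finset.sum_range_reflect (fun j => (Nat.choose m j : ℝ) *
        (if m ≤ n + j then (Nat.choose s (n + j - m) : ℝ) else 0) *
          (Nat.choose (s + m - j) m : ℝ)) (m+1)]
    apply Finset.sum_congr rfl
    intro j hj
    simp only [Finset.mem_range, Nat.lt_succ_iff] at hj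
    have h1 : m + 1 - 1 - j = m - j := by omega
    have h2 : m.choose (m - j) = m.choose j := Nat.choose_symm hj
    have h3 : s + m - (m - j) = s + j := by omega
    rw [h1, h2, h3]
    by_cases hjn : j ≤ n
    · rw [if_pos (show m ≤ n + (m - j) by omega), if_pos hjn]
      rw [show n + (m - j) - m = n - j by omega]
      ring
    · rw [if_neg (show ¬ m ≤ n + (m - j) by omega), if_neg hjn]
      ring
  rw [hstep1]
  -- change summation range
  have hstep2 : ∑ j ∈ range (m+1), (if j ≤ n then (1:ℝ) else 0) *
        ((s.choose (n-j) : ℝ) * (m.choose j : ℝ) * (((s+j).choose m : ℕ) : ℝ))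
      = ∑ j ∈ range (n+1), (s.choose (n-j) : ℝ) * (m.choose j : ℝ) * (((s+j).choose m : ℕ) : ℝ) := by
    have hL : ∑ j ∈ range (m+1), (if j ≤ n then (1:ℝ) else 0) *
          ((s.choose (n-j) : ℝ) * (m.choose j : ℝ) * (((s+j).choose m : ℕ) : ℝ))
        = ∑ j ∈ range (m+n+1), (if j ≤ n then (1:ℝ) else 0) *
          ((s.choose (n-j) : ℝ) * (m.choose j : ℝ) * (((s+j).choose m : ℕ) : ℝ)) := by
      apply Finset.sum_subset (Finset.range_subset_range.mpr (by omega))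
      intro j _ hj
      simp only [Finset.mem_range, not_lt] at hj
      rw [Nat.choose_eq_zero_of_lt (show m < j by omega)]
      simp
    have hR : ∑ j ∈ range (n+1), (s.choose (n-j) : ℝ) * (m.choose j : ℝ) * (((s+j).choose m : ℕ) : ℝ)
        = ∑ j ∈ range (m+n+1), (if j ≤ n then (1:ℝ) else 0) *
          ((s.choose (n-j) : ℝ) * (m.choose j : ℝ) * (((s+j).choose m : ℕ) : ℝ)) := by
      rw [eq_comm]
      rw [← Finset.sum_subset (Finset.range_subset_range.mpr (show n+1 ≤ m+n+1 by omega))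
        (fun j _ hj => by
          simp only [Finset.mem_range, not_lt] at hj
          rw [if_neg (show ¬ j ≤ n by omega)]
          ring)]
      apply Finset.sum_congr rfl
      intro j hj
      simp only [Finset.mem_range, Nat.lt_succ_iff] at hj
      rw [if_pos hj]
      ring
    rw [hL, hR]
  rw [hstep2]
  have hsq : (-1:ℝ)^(m+n) * (-1:ℝ)^(m+n) = 1 := by
    rw [← pow_add]
    exact Even.neg_one_pow ⟨m+n, rfl⟩
  calc (-1:ℝ)^(m+n) * ((-1:ℝ)^(m+n) * (Nat.factorial m : ℝ) * (Nat.factorial n : ℝ) * (Nat.factorial s : ℝ) *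
        ∑ j ∈ range (n+1), (s.choose (n-j) : ℝ) * (m.choose j : ℝ) * (((s+j).choose m : ℕ) : ℝ))
      = ((-1:ℝ)^(m+n) * (-1:ℝ)^(m+n)) * ((Nat.factorial m : ℝ) * (Nat.factorial n : ℝ) * (Nat.factorial s : ℝ) *
        ∑ j ∈ range (n+1), (s.choose (n-j) : ℝ) * (m.choose j : ℝ) * (((s+j).choose m : ℕ) : ℝ)) := by ring
    _ = (Nat.factorial m : ℝ) * (Nat.factorial n : ℝ) * (Nat.factorial s : ℝ) *
        ∑ j ∈ range (n+1), (s.choose (n-j) : ℝ) * (m.choose j : ℝ) * (((s+j).choose m : ℕ) : ℝ) := by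
        rw [hsq, one_mul]

end Paper
end
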